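/- arXiv:2009.13866 — 4 statements merged into one kernel-verified Lean document; each statement's English description precedes it below -/
import Mathlib

section
/- For every η > 0 there exists a constant c_η > 0 such that the following holds: for every θ ∈ (0,1), every a, b ∈ (0,1) and every integer n ≥ 1 satisfying n^θ (1−b) ≥ (1+η) n a, one has P( ζ_1 + ⋯ + ζ_n ≥ n^θ and #{ 1 ≤ i ≤ n : ζ_i ≥ 1 } ≥ 2 ) ≤ 2 (n a)^2 · exp(−c_η n^θ (1−b)). -/
open MeasureTheory ProbabilityTheory
open scoped ENNReal

set_option maxHeartbeats 2000000


lemma aux_lintegral_prod_indep {Ω : Type} [MeasurableSpace Ω] {μ : Measure Ω}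
    [IsProbabilityMeasure μ] {X : ℕ → Ω → ℝ≥0∞} (hX : ∀ i, Measurable (X i))
    (h : iIndepFun X μ) (s : Finset ℕ) :
    ∫⁻ ω, ∏ k ∈ s, X k ω ∂μ = ∏ k ∈ s, ∫⁻ ω, X k ω ∂μ := by
  induction s using Finset.cons_induction with
  | empty => simp
  | cons i s hi ih =>
    simp only [Finset.prod_cons]
    have hind : IndepFun (X i) (fun ω => ∏ k ∈ s, X k ω) μ := by
      have h2 := (h.indepFun_finsetProd_of_notMem hX hi).symm
      have : (∏ j ∈ s, X j) = fun ω => ∏ k ∈ s, X k ω := by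
        funext ω; simp [Finset.prod_apply]
      rwa [this] at h2
    rw [lintegral_mul_eq_lintegral_mul_lintegral_of_indepFun'' (hX i).aemeasurable
      (Finset.measurable_prod s (fun k _ => hX k)).aemeasurable hind, ih]

lemma aux_geo_tsum {a b L : ℝ} (ha0 : 0 < a) (hb0 : 0 < b) (hb1 : b < 1)
    (hbe : b * Real.exp L < 1) :
    ∑' s : ℕ, ENNReal.ofReal (Real.exp (L * ((s+1 : ℕ) : ℝ))) * ENNReal.ofReal (a * (1-b) * b ^ s)
      = ENNReal.ofReal (a * (1-b) * Real.exp L * (1 - b * Real.exp L)⁻¹) := by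
  have hbL0 : 0 ≤ b * Real.exp L := by positivity
  have key : ∀ s : ℕ,
      ENNReal.ofReal (Real.exp (L * ((s+1 : ℕ) : ℝ))) * ENNReal.ofReal (a * (1-b) * b ^ s)
        = ENNReal.ofReal (a * (1-b) * Real.exp L) * ENNReal.ofReal (b * Real.exp L) ^ s := by
    intro s
    have hr : Real.exp (L * ((s+1 : ℕ) : ℝ)) * (a * (1-b) * b ^ s)
        = (a * (1-b) * Real.exp L) * (b * Real.exp L) ^ s := by
      have h1 : L * ((s+1 : ℕ) : ℝ) = (s : ℝ) * L + L := by push_cast; ring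
      rw [h1, Real.exp_add, Real.exp_nat_mul, mul_pow]; ring
    rw [← ENNReal.ofReal_mul (Real.exp_nonneg _), hr,
      ENNReal.ofReal_mul (mul_nonneg (mul_nonneg ha0.le (by linarith)) (Real.exp_pos L).le),
      ENNReal.ofReal_pow hbL0]
  rw [tsum_congr key, ENNReal.tsum_mul_left, ENNReal.tsum_geometric]
  have h2 : (1 : ℝ≥0∞) - ENNReal.ofReal (b * Real.exp L) = ENNReal.ofReal (1 - b * Real.exp L) := by
    rw [ENNReal.ofReal_sub _ hbL0, ENNReal.ofReal_one]
  rw [h2, ← ENNReal.ofReal_inv_of_pos (by linarith),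
    ← ENNReal.ofReal_mul (mul_nonneg (mul_nonneg ha0.le (by linarith)) (Real.exp_pos L).le)]

lemma aux_geo_lintegral {Ω : Type} [MeasurableSpace Ω] (μ : Measure Ω)
    [IsProbabilityMeasure μ] (Z : Ω → ℕ) (hmeas : Measurable Z)
    {a b : ℝ} (ha0 : 0 < a) (hb0 : 0 < b) (hb1 : b < 1)
    (h0 : μ {ω | Z ω = 0} = ENNReal.ofReal (1 - a))
    (htail : ∀ k : ℕ, 1 ≤ k → μ {ω | k ≤ Z ω} = ENNReal.ofReal (a * b ^ (k - 1)))
    (f : ℕ → ℝ≥0∞) :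
    ∫⁻ ω, f (Z ω) ∂μ
      = f 0 * ENNReal.ofReal (1 - a)
        + ∑' s : ℕ, f (s+1) * ENNReal.ofReal (a * (1-b) * b ^ s) := by
  have hpoint : ∀ s : ℕ, μ {ω | Z ω = s + 1} = ENNReal.ofReal (a * (1-b) * b ^ s) := by
    intro s
    have hset : {ω | Z ω = s + 1} = {ω | s + 1 ≤ Z ω} \ {ω | s + 2 ≤ Z ω} := by
      ext ω; simp only [Set.mem_setOf_eq, Set.mem_diff]; omega
    have hsub : {ω | s + 2 ≤ Z ω} ⊆ {ω | s + 1 ≤ Z ω} := fun ω h => by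
      simp only [Set.mem_setOf_eq] at *; omega
    have hm2 : MeasurableSet {ω | s + 2 ≤ Z ω} := hmeas measurableSet_Ici
    rw [hset, measure_diff hsub hm2.nullMeasurableSet (measure_ne_top μ _),
      htail (s+1) (by omega), htail (s+2) (by omega)]
    have e1 : s + 1 - 1 = s := by omega
    have e2 : s + 2 - 1 = s + 1 := by omega
    rw [e1, e2, ← ENNReal.ofReal_sub _ (by positivity)]
    congr 1
    ring
  calc ∫⁻ ω, f (Z ω) ∂μ = ∫⁻ m, f m ∂(μ.map Z) := (lintegral_map measurable_from_top hmeas).symm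
    _ = ∑' m : ℕ, f m * (μ.map Z) {m} := lintegral_countable' f
    _ = ∑' m : ℕ, f m * μ {ω | Z ω = m} := by
        refine tsum_congr fun m => ?_
        rw [Measure.map_apply hmeas (measurableSet_singleton m)]
        congr 1
    _ = f 0 * μ {ω | Z ω = 0} + ∑' s : ℕ, f (s+1) * μ {ω | Z ω = s+1} :=
        tsum_eq_zero_add' ENNReal.summable
    _ = _ := by rw [h0]; congr 1; exact tsum_congr fun s => by rw [hpoint s]
lemma aux_lint_exp {Ω : Type} [MeasurableSpace Ω] (μ : Measure Ω)
    [IsProbabilityMeasure μ] (Z : Ω → ℕ) (hmeas : Measurable Z)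
    {a b L : ℝ} (ha0 : 0 < a) (ha1 : a < 1) (hb0 : 0 < b) (hb1 : b < 1)
    (hbe : b * Real.exp L < 1)
    (h0 : μ {ω | Z ω = 0} = ENNReal.ofReal (1 - a))
    (htail : ∀ k : ℕ, 1 ≤ k → μ {ω | k ≤ Z ω} = ENNReal.ofReal (a * b ^ (k - 1))) :
    ∫⁻ ω, ENNReal.ofReal (Real.exp (L * (Z ω : ℝ))) ∂μ
      = ENNReal.ofReal ((1 - a) + a * ((1-b) * Real.exp L / (1 - b * Real.exp L))) := by
  rw [aux_geo_lintegral μ Z hmeas ha0 hb0 hb1 h0 htail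
    (fun m => ENNReal.ofReal (Real.exp (L * (m : ℝ)))), aux_geo_tsum ha0 hb0 hb1 hbe]
  have h1 : ENNReal.ofReal (Real.exp (L * ((0:ℕ) : ℝ))) = 1 := by
    norm_num
  rw [h1, one_mul, ← ENNReal.ofReal_add (by linarith)
    (mul_nonneg (mul_nonneg (mul_nonneg ha0.le (by linarith)) (Real.exp_pos L).le)
      (inv_nonneg.mpr (by linarith)))]
  congr 1
  field_simp

lemma aux_lint_ind {Ω : Type} [MeasurableSpace Ω] (μ : Measure Ω)
    [IsProbabilityMeasure μ] (Z : Ω → ℕ) (hmeas : Measurable Z)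
    {a b L : ℝ} (ha0 : 0 < a) (hb0 : 0 < b) (hb1 : b < 1)
    (hbe : b * Real.exp L < 1)
    (h0 : μ {ω | Z ω = 0} = ENNReal.ofReal (1 - a))
    (htail : ∀ k : ℕ, 1 ≤ k → μ {ω | k ≤ Z ω} = ENNReal.ofReal (a * b ^ (k - 1))) :
    ∫⁻ ω, (if 1 ≤ Z ω then ENNReal.ofReal (Real.exp (L * (Z ω : ℝ))) else 0) ∂μ
      = ENNReal.ofReal (a * ((1-b) * Real.exp L / (1 - b * Real.exp L))) := by
  rw [aux_geo_lintegral μ Z hmeas ha0 hb0 hb1 h0 htail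
    (fun m => if 1 ≤ m then ENNReal.ofReal (Real.exp (L * (m : ℝ))) else 0)]
  simp only [Nat.le_add_left, if_true, show ¬ (1 ≤ 0) by omega, if_false, zero_mul, zero_add]
  rw [aux_geo_tsum ha0 hb0 hb1 hbe]
  congr 1
  field_simp

/-- For every `η > 0` there exists `c_η > 0` such that for every `θ ∈ (0,1)`,
`a, b ∈ (0,1)` and `n ≥ 1` with `n^θ (1-b) ≥ (1+η) n a`, and every i.i.d. sequence
`(ζ_i)` of `ℕ`-valued random variables with `P(ζ_1 = 0) = 1 - a` and
`P(ζ_1 ≥ k) = a b^(k-1)` for `k ≥ 1`, one has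
`P(ζ_1 + ⋯ + ζ_n ≥ n^θ, #{1 ≤ i ≤ n : ζ_i ≥ 1} ≥ 2) ≤ 2 (n a)^2 exp(-c_η n^θ (1-b))`. -/
theorem sumGeo_large_two_excursions :
    ∀ η : ℝ, 0 < η → ∃ c : ℝ, 0 < c ∧
      ∀ (θ a b : ℝ) (n : ℕ),
        θ ∈ Set.Ioo (0:ℝ) 1 → a ∈ Set.Ioo (0:ℝ) 1 → b ∈ Set.Ioo (0:ℝ) 1 →
        1 ≤ n → (1 + η) * n * a ≤ (n : ℝ) ^ θ * (1 - b) →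
        ∀ (Ω : Type) (_ : MeasurableSpace Ω) (μ : Measure Ω), IsProbabilityMeasure μ →
        ∀ ζ : ℕ → Ω → ℕ, (∀ i, Measurable (ζ i)) →
          iIndepFun ζ μ →
          (∀ i, 1 ≤ i → μ {ω | ζ i ω = 0} = ENNReal.ofReal (1 - a)) →
          (∀ i k, 1 ≤ i → 1 ≤ k → μ {ω | k ≤ ζ i ω} = ENNReal.ofReal (a * b ^ (k - 1))) →
          (μ {ω | (n : ℝ) ^ θ ≤ ∑ i ∈ Finset.Icc 1 n, (ζ i ω : ℝ) ∧
              2 ≤ ((Finset.Icc 1 n).filter (fun i => 1 ≤ ζ i ω)).card}).toReal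
            ≤ 2 * ((n : ℝ) * a) ^ 2 * Real.exp (-c * (n : ℝ) ^ θ * (1 - b)) := by
  intro η hη
  refine ⟨min 4⁻¹ (η/8) * η / (2*(1+η)), by positivity, ?_⟩
  intro θ a b n hθ ha hb hn hcond Ω mΩ μ hμ ζ hζ hindep h0 htail
  obtain ⟨hθ0, hθ1⟩ := hθ
  obtain ⟨ha0, ha1⟩ := ha
  obtain ⟨hb0, hb1⟩ := hb
  set c₁ : ℝ := min 4⁻¹ (η/8) with hc₁def
  have hc₁0 : 0 < c₁ := lt_min (by norm_num) (by positivity)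
  have hc₁4 : c₁ ≤ 4⁻¹ := min_le_left _ _
  have hc₁8 : c₁ ≤ η/8 := min_le_right _ _
  have hb1' : 0 < 1 - b := by linarith
  clear_value c₁
  have hn0 : (0:ℝ) < n := by
    have : (0:ℕ) < n := by omega
    exact_mod_cast this
  set t : ℝ := (n:ℝ) ^ θ with htdef
  have ht0 : 0 < t := Real.rpow_pos_of_pos hn0 θ
  set L : ℝ := c₁ * (1 - b) with hLdef
  have hL0 : 0 < L := mul_pos hc₁0 hb1'
  clear_value t L
  have hLc₁ : L ≤ c₁ := by nlinarith
  have hexp_ub : ∀ x : ℝ, Real.exp x * (1 - x) ≤ 1 := by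
    intro x
    have h := Real.add_one_le_exp (-x)
    rw [Real.exp_neg] at h
    calc Real.exp x * (1-x) = Real.exp x * (-x+1) := by ring
      _ ≤ Real.exp x * (Real.exp x)⁻¹ := mul_le_mul_of_nonneg_left h (Real.exp_pos x).le
      _ = 1 := mul_inv_cancel₀ (ne_of_gt (Real.exp_pos x))
  have hEc : Real.exp c₁ * (1 - c₁) ≤ 1 := hexp_ub c₁
  have hE1 : 1 ≤ Real.exp c₁ := Real.one_le_exp hc₁0.le
  have hu13 : c₁ * Real.exp c₁ ≤ 1/3 := by
    nlinarith [mul_le_mul_of_nonneg_left hEc hc₁0.le,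
      mul_nonneg hc₁0.le (Real.exp_pos c₁).le]
  have hden1 : 0 < 1 - c₁ * Real.exp c₁ := by linarith
  set F : ℝ := Real.exp c₁ / (1 - c₁ * Real.exp c₁) with hFdef
  have hF0 : 0 < F := div_pos (Real.exp_pos c₁) hden1
  clear_value F
  have hF4 : F ≤ 1 + 4 * c₁ := by
    rw [hFdef, div_le_iff₀ hden1]
    nlinarith [hEc, hu13, mul_le_mul_of_nonneg_left hu13 hc₁0.le, hE1, hc₁4, hc₁0]
  have hF2 : F ≤ 2 := by linarith
  have hFη : F ≤ 1 + η/2 := by linarith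
  have heL : Real.exp L ≤ Real.exp c₁ := Real.exp_le_exp.mpr hLc₁
  have heL1 : 1 ≤ Real.exp L := Real.one_le_exp hL0.le
  have hLe : Real.exp L ≤ 1 + L * Real.exp L := by nlinarith [hexp_ub L]
  have hbexp : b * Real.exp L ≤ Real.exp c₁ := by nlinarith [Real.exp_pos L, heL]
  have hbeL : b * Real.exp L ≤ b + c₁ * Real.exp c₁ * (1 - b) := by
    have h1 : b * Real.exp L ≤ b * (1 + L * Real.exp L) :=
      mul_le_mul_of_nonneg_left hLe hb0.le
    have hX0 : 0 ≤ L * Real.exp L := by positivity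
    have h2 : b * (L * Real.exp L) ≤ c₁ * Real.exp c₁ * (1-b) := by
      have step1 : b * (L * Real.exp L) ≤ L * Real.exp L := by nlinarith [hX0, hb1]
      have step2 : L * Real.exp L ≤ L * Real.exp c₁ := mul_le_mul_of_nonneg_left heL hL0.le
      have step3 : L * Real.exp c₁ = c₁ * Real.exp c₁ * (1-b) := by rw [hLdef]; ring
      linarith
    have h1' : b * (1 + L * Real.exp L) = b + b * (L * Real.exp L) := by ring
    linarith
  have hden : (1-b) * (1 - c₁ * Real.exp c₁) ≤ 1 - b * Real.exp L := by nlinarith [hbeL, hb0, hden1]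
  have hdenpos : 0 < 1 - b * Real.exp L :=
    lt_of_lt_of_le (by nlinarith [hb1', hden1]) hden
  have hbe1 : b * Real.exp L < 1 := by linarith
  set E' : ℝ := (1-b) * Real.exp L / (1 - b * Real.exp L) with hE'def
  clear_value E'
  have hE'0 : 0 ≤ E' := by
    rw [hE'def]
    exact div_nonneg (mul_nonneg hb1'.le (Real.exp_pos L).le) hdenpos.le
  have hE'F : E' ≤ F := by
    have h1 : E' ≤ (1-b) * Real.exp c₁ / ((1-b) * (1 - c₁ * Real.exp c₁)) := by
      rw [hE'def]
      exact div_le_div₀ (mul_nonneg hb1'.le (Real.exp_pos c₁).le)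
        (mul_le_mul_of_nonneg_left heL hb1'.le) (mul_pos hb1' hden1) hden
    rw [mul_div_mul_left _ _ (ne_of_gt hb1')] at h1
    rw [hFdef]
    exact h1
  have hKb : (Real.exp L - 1) / (1 - b * Real.exp L) ≤ c₁ * F := by
    have hnum : Real.exp L - 1 ≤ c₁ * (1-b) * Real.exp c₁ := by
      have h3 : Real.exp L - 1 ≤ L * Real.exp L := by nlinarith [hexp_ub L]
      have h4 : L * Real.exp L ≤ c₁ * (1-b) * Real.exp c₁ := by
        have s2 : L * Real.exp L ≤ L * Real.exp c₁ := mul_le_mul_of_nonneg_left heL hL0.le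
        have s3 : L * Real.exp c₁ = c₁ * (1-b) * Real.exp c₁ := by rw [hLdef]
        linarith
      linarith
    have h1 : (Real.exp L - 1) / (1 - b * Real.exp L)
        ≤ c₁ * (1-b) * Real.exp c₁ / ((1-b) * (1 - c₁ * Real.exp c₁)) :=
      div_le_div₀ (mul_nonneg (mul_nonneg hc₁0.le hb1'.le) (Real.exp_pos c₁).le)
        hnum (mul_pos hb1' hden1) hden
    have h2 : c₁ * (1-b) * Real.exp c₁ / ((1-b) * (1 - c₁ * Real.exp c₁)) = c₁ * F := by
      rw [hFdef]
      field_simp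
    rw [h2] at h1
    exact h1
  -- the measure-theoretic part
  set I : Finset ℕ := Finset.Icc 1 n with hIdef
  have hcardI : I.card = n := by rw [hIdef, Nat.card_Icc]; omega
  have honeI : ∀ k ∈ I, 1 ≤ k := by
    intro k hk
    rw [hIdef, Finset.mem_Icc] at hk
    exact hk.1
  set cF : ℝ := a * (c₁ * F) with hcFdef
  have hcF0 : 0 ≤ cF := by
    rw [hcFdef]
    exact mul_nonneg ha0.le (mul_nonneg hc₁0.le hF0.le)
  set Gf : ℕ → ℕ → ℕ → ℕ → ℝ≥0∞ := fun i j k m =>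
    if k = i ∨ k = j then (if 1 ≤ m then ENNReal.ofReal (Real.exp (L * (m:ℝ))) else 0)
    else ENNReal.ofReal (Real.exp (L * (m:ℝ))) with hGfdef
  set g : Ω → ℝ≥0∞ := fun ω => ENNReal.ofReal (Real.exp (-(L*t))) *
    ∑ i ∈ I, ∑ j ∈ I.erase i, ∏ k ∈ I, Gf i j k (ζ k ω) with hgdef
  have hGmeas : ∀ i j, Measurable (fun ω => ∏ k ∈ I, Gf i j k (ζ k ω)) := by
    intro i j
    refine Finset.measurable_prod I (fun k _ => ?_)
    have hm : Measurable (Gf i j k) := measurable_from_top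
    exact hm.comp (hζ k)
  have hsummeas : Measurable (fun ω => ∑ i ∈ I, ∑ j ∈ I.erase i, ∏ k ∈ I, Gf i j k (ζ k ω)) :=
    Finset.measurable_sum I (fun i _ => Finset.measurable_sum _ (fun j _ => hGmeas i j))
  have hgmeas : Measurable g := hsummeas.const_mul _
  set A : Set Ω := {ω | t ≤ ∑ i ∈ I, (ζ i ω : ℝ) ∧
      2 ≤ (I.filter (fun i => 1 ≤ ζ i ω)).card} with hAdef
  -- Step A : A ⊆ {ω | 2 ≤ g ω}
  have hsubset : A ⊆ {ω | (2:ℝ≥0∞) ≤ g ω} := by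
    intro ω hω
    obtain ⟨hS, hcard⟩ := hω
    obtain ⟨i₀, hi₀, j₀, hj₀, hne⟩ := Finset.one_lt_card.mp
      (by omega : 1 < (I.filter (fun i => 1 ≤ ζ i ω)).card)
    rw [Finset.mem_filter] at hi₀ hj₀
    set X : ℝ≥0∞ := ENNReal.ofReal (Real.exp (L * (∑ i ∈ I, (ζ i ω : ℝ)))) with hXdef
    have hkey : ∀ p q, 1 ≤ ζ p ω → 1 ≤ ζ q ω →
        X = ∏ k ∈ I, Gf p q k (ζ k ω) := by
      intro p q hp1 hq1
      have hGfval : ∀ k ∈ I, Gf p q k (ζ k ω)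
          = ENNReal.ofReal (Real.exp (L * (ζ k ω : ℝ))) := by
        intro k hk
        by_cases hc : k = p ∨ k = q
        · have h1 : 1 ≤ ζ k ω := by rcases hc with rfl | rfl; exacts [hp1, hq1]
          simp only [hGfdef, if_pos hc, if_pos h1]
        · simp only [hGfdef, if_neg hc]
      rw [Finset.prod_congr rfl hGfval, ← ENNReal.ofReal_prod_of_nonneg
        (fun k _ => (Real.exp_nonneg _)), hXdef]
      congr 1
      rw [Finset.mul_sum, Real.exp_sum]
    have h1 : X ≤ ∑ j ∈ I.erase i₀, ∏ k ∈ I, Gf i₀ j k (ζ k ω) := by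
      rw [hkey i₀ j₀ hi₀.2 hj₀.2]
      exact Finset.single_le_sum (f := fun j => ∏ k ∈ I, Gf i₀ j k (ζ k ω))
        (fun j _ => zero_le) (Finset.mem_erase.mpr ⟨hne.symm, hj₀.1⟩)
    have h2 : X ≤ ∑ j ∈ I.erase j₀, ∏ k ∈ I, Gf j₀ j k (ζ k ω) := by
      rw [hkey j₀ i₀ hj₀.2 hi₀.2]
      exact Finset.single_le_sum (f := fun j => ∏ k ∈ I, Gf j₀ j k (ζ k ω))
        (fun j _ => zero_le) (Finset.mem_erase.mpr ⟨hne, hi₀.1⟩)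
    have h3 : X + X ≤ ∑ i ∈ I, ∑ j ∈ I.erase i, ∏ k ∈ I, Gf i j k (ζ k ω) := by
      calc X + X ≤ (∑ j ∈ I.erase i₀, ∏ k ∈ I, Gf i₀ j k (ζ k ω))
            + (∑ j ∈ I.erase j₀, ∏ k ∈ I, Gf j₀ j k (ζ k ω)) := add_le_add h1 h2
        _ = ∑ i ∈ ({i₀, j₀} : Finset ℕ), ∑ j ∈ I.erase i, ∏ k ∈ I, Gf i j k (ζ k ω) :=
            (Finset.sum_pair
              (f := fun i => ∑ j ∈ I.erase i, ∏ k ∈ I, Gf i j k (ζ k ω)) hne).symm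
        _ ≤ _ := Finset.sum_le_sum_of_subset (by
            intro x hx
            rcases Finset.mem_insert.mp hx with rfl | hx2
            · exact hi₀.1
            · rw [Finset.mem_singleton] at hx2
              subst hx2
              exact hj₀.1)
    have hXlb : ENNReal.ofReal (Real.exp (L * t)) ≤ X := by
      rw [hXdef]
      exact ENNReal.ofReal_le_ofReal (Real.exp_le_exp.mpr
        (mul_le_mul_of_nonneg_left hS hL0.le))
    have hval : Real.exp (-(L*t)) * (Real.exp (L*t) + Real.exp (L*t)) = 2 := by
      rw [Real.exp_neg]
      field_simp
      ring
    have h4 : (2:ℝ≥0∞) = ENNReal.ofReal (Real.exp (-(L*t))) *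
        (ENNReal.ofReal (Real.exp (L*t)) + ENNReal.ofReal (Real.exp (L*t))) := by
      rw [← ENNReal.ofReal_add (Real.exp_nonneg _) (Real.exp_nonneg _),
        ← ENNReal.ofReal_mul (Real.exp_nonneg _), hval]
      norm_num
    show (2:ℝ≥0∞) ≤ g ω
    calc (2:ℝ≥0∞) = ENNReal.ofReal (Real.exp (-(L*t))) *
          (ENNReal.ofReal (Real.exp (L*t)) + ENNReal.ofReal (Real.exp (L*t))) := h4
      _ ≤ ENNReal.ofReal (Real.exp (-(L*t))) * (X + X) :=
          mul_le_mul_right (add_le_add hXlb hXlb) _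
      _ ≤ ENNReal.ofReal (Real.exp (-(L*t))) *
          ∑ i ∈ I, ∑ j ∈ I.erase i, ∏ k ∈ I, Gf i j k (ζ k ω) := mul_le_mul_right h3 _
      _ = g ω := rfl
  -- Step Markov
  have hMarkov : (2:ℝ≥0∞) * μ A ≤ ∫⁻ ω, g ω ∂μ := by
    calc (2:ℝ≥0∞) * μ A ≤ 2 * μ {ω | (2:ℝ≥0∞) ≤ g ω} :=
          mul_le_mul_right (measure_mono hsubset) _
      _ ≤ ∫⁻ ω, g ω ∂μ := mul_meas_ge_le_lintegral₀ hgmeas.aemeasurable 2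
  -- Step B : factor bound per pair
  have hfactor : ∀ i ∈ I, ∀ j ∈ I.erase i,
      ∫⁻ ω, ∏ k ∈ I, Gf i j k (ζ k ω) ∂μ
        ≤ ENNReal.ofReal (4*a^2 * Real.exp ((n:ℝ) * cF)) := by
    intro i hi j hj
    obtain ⟨hji, hjI⟩ := Finset.mem_erase.mp hj
    have hX : ∀ k, Measurable (fun ω => Gf i j k (ζ k ω)) := by
      intro k
      have hm : Measurable (Gf i j k) := measurable_from_top
      exact hm.comp (hζ k)
    have hind : iIndepFun (fun k ω => Gf i j k (ζ k ω)) μ := by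
      have h5 := hindep.comp (fun k => Gf i j k) (fun k => measurable_from_top)
      exact h5
    rw [aux_lintegral_prod_indep (X := fun k ω => Gf i j k (ζ k ω)) hX hind I]
    have hval : ∀ k ∈ I, ∫⁻ ω, Gf i j k (ζ k ω) ∂μ
        ≤ if k = i ∨ k = j then ENNReal.ofReal (2*a) else ENNReal.ofReal (Real.exp cF) := by
      intro k hk
      have h0k := h0 k (honeI k hk)
      have htailk : ∀ m : ℕ, 1 ≤ m → μ {ω | m ≤ ζ k ω} = ENNReal.ofReal (a * b ^ (m-1)) :=
        fun m hm => htail k m (honeI k hk) hm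
      by_cases hc : k = i ∨ k = j
      · rw [if_pos hc]
        have hGeq : (fun ω => Gf i j k (ζ k ω))
            = fun ω => if 1 ≤ ζ k ω then ENNReal.ofReal (Real.exp (L * (ζ k ω : ℝ))) else 0 := by
          funext ω
          simp only [hGfdef, if_pos hc]
        rw [hGeq, aux_lint_ind μ (ζ k) (hζ k) ha0 hb0 hb1 hbe1 h0k htailk]
        apply ENNReal.ofReal_le_ofReal
        rw [← hE'def]
        nlinarith [hE'F, hF2, ha0, hE'0]
      · rw [if_neg hc]
        have hGeq : (fun ω => Gf i j k (ζ k ω))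
            = fun ω => ENNReal.ofReal (Real.exp (L * (ζ k ω : ℝ))) := by
          funext ω
          simp only [hGfdef, if_neg hc]
        rw [hGeq, aux_lint_exp μ (ζ k) (hζ k) ha0 ha1 hb0 hb1 hbe1 h0k htailk]
        apply ENNReal.ofReal_le_ofReal
        rw [← hE'def]
        have hE'1 : E' - 1 = (Real.exp L - 1)/(1 - b*Real.exp L) := by
          rw [hE'def]
          field_simp
          ring
        have h6 := Real.add_one_le_exp cF
        rw [hcFdef]
        nlinarith [mul_le_mul_of_nonneg_left hKb ha0.le, hE'1, hcFdef ▸ h6, hKb]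
    calc ∏ k ∈ I, ∫⁻ ω, Gf i j k (ζ k ω) ∂μ
        ≤ ∏ k ∈ I, (if k = i ∨ k = j then ENNReal.ofReal (2*a)
            else ENNReal.ofReal (Real.exp cF)) := Finset.prod_le_prod' hval
      _ ≤ ENNReal.ofReal (4*a^2*Real.exp ((n:ℝ)*cF)) := by
          set W : ℕ → ℝ≥0∞ := fun k => if k = i ∨ k = j then ENNReal.ofReal (2*a)
            else ENNReal.ofReal (Real.exp cF) with hWdef
          have hWi : W i = ENNReal.ofReal (2*a) := by simp [hWdef]
          have hWj : W j = ENNReal.ofReal (2*a) := by simp [hWdef]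
          have hsplit : ∏ k ∈ I, W k = ((∏ k ∈ (I.erase i).erase j, W k) * W j) * W i := by
            rw [← Finset.prod_erase_mul I W hi,
              ← Finset.prod_erase_mul (I.erase i) W (Finset.mem_erase.mpr ⟨hji, hjI⟩)]
          have hrest : ∀ k ∈ (I.erase i).erase j, W k = ENNReal.ofReal (Real.exp cF) := by
            intro k hk
            obtain ⟨hkj, hk2⟩ := Finset.mem_erase.mp hk
            obtain ⟨hki, _⟩ := Finset.mem_erase.mp hk2
            simp [hWdef, hki, hkj]
          have hcard2 : ((I.erase i).erase j).card ≤ n := by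
            have hsub : ((I.erase i).erase j) ⊆ I :=
              (Finset.erase_subset _ _).trans (Finset.erase_subset _ _)
            have := Finset.card_le_card hsub
            omega
          have hconst : ∏ k ∈ (I.erase i).erase j, W k
              ≤ ENNReal.ofReal (Real.exp ((n:ℝ)*cF)) := by
            rw [Finset.prod_congr rfl hrest, Finset.prod_const,
              ← ENNReal.ofReal_pow (Real.exp_nonneg _), ← Real.exp_nat_mul]
            apply ENNReal.ofReal_le_ofReal
            apply Real.exp_le_exp.mpr
            have hcast : (((I.erase i).erase j).card : ℝ) ≤ (n:ℝ) := by
              exact_mod_cast hcard2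
            exact mul_le_mul_of_nonneg_right hcast hcF0
          calc ∏ k ∈ I, W k = ((∏ k ∈ (I.erase i).erase j, W k) * W j) * W i := hsplit
            _ ≤ (ENNReal.ofReal (Real.exp ((n:ℝ)*cF)) * ENNReal.ofReal (2*a))
                * ENNReal.ofReal (2*a) := by
                rw [hWi, hWj]
                exact mul_le_mul_left (mul_le_mul_left hconst _) _
            _ = ENNReal.ofReal (4*a^2*Real.exp ((n:ℝ)*cF)) := by
                rw [← ENNReal.ofReal_mul (Real.exp_nonneg _),
                  ← ENNReal.ofReal_mul (mul_nonneg (Real.exp_nonneg _) (by positivity))]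
                congr 1
                ring
  -- Step C : bound the full lintegral
  have hlint : ∫⁻ ω, g ω ∂μ ≤ ENNReal.ofReal (Real.exp (-(L*t))) *
      ((n:ℝ≥0∞) * ((n:ℝ≥0∞) * ENNReal.ofReal (4*a^2*Real.exp ((n:ℝ)*cF)))) := by
    have hgexp : ∫⁻ ω, g ω ∂μ = ENNReal.ofReal (Real.exp (-(L*t))) *
        ∫⁻ ω, ∑ i ∈ I, ∑ j ∈ I.erase i, ∏ k ∈ I, Gf i j k (ζ k ω) ∂μ := by
      simp only [hgdef]
      rw [lintegral_const_mul _ hsummeas]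
    rw [hgexp]
    apply mul_le_mul_right
    rw [lintegral_finset_sum _ (fun i _ => Finset.measurable_sum _ (fun j _ => hGmeas i j))]
    calc ∑ i ∈ I, ∫⁻ ω, ∑ j ∈ I.erase i, ∏ k ∈ I, Gf i j k (ζ k ω) ∂μ
        = ∑ i ∈ I, ∑ j ∈ I.erase i, ∫⁻ ω, ∏ k ∈ I, Gf i j k (ζ k ω) ∂μ :=
          Finset.sum_congr rfl (fun i _ =>
            lintegral_finset_sum _ (fun j _ => hGmeas i j))
      _ ≤ ∑ i ∈ I, ∑ _j ∈ I.erase i, ENNReal.ofReal (4*a^2*Real.exp ((n:ℝ)*cF)) :=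
          Finset.sum_le_sum (fun i hi => Finset.sum_le_sum (fun j hj => hfactor i hi j hj))
      _ ≤ ∑ _i ∈ I, (n:ℝ≥0∞) * ENNReal.ofReal (4*a^2*Real.exp ((n:ℝ)*cF)) := by
          apply Finset.sum_le_sum
          intro i _
          rw [Finset.sum_const, nsmul_eq_mul]
          apply mul_le_mul_left
          exact_mod_cast Nat.cast_le.mpr (le_trans (Finset.card_erase_le) hcardI.le)
      _ = (n:ℝ≥0∞) * ((n:ℝ≥0∞) * ENNReal.ofReal (4*a^2*Real.exp ((n:ℝ)*cF))) := by
          rw [Finset.sum_const, nsmul_eq_mul, hcardI]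
  -- Step D : assemble
  set B : ℝ := 2 * ((n:ℝ)*a)^2 * Real.exp ((n:ℝ)*cF - L*t) with hBdef
  have hchain : (2:ℝ≥0∞) * μ A ≤ (2:ℝ≥0∞) * ENNReal.ofReal B := by
    refine le_trans hMarkov (le_trans hlint ?_)
    have hn2 : ((n:ℕ):ℝ≥0∞) = ENNReal.ofReal ((n:ℕ):ℝ) := (ENNReal.ofReal_natCast n).symm
    rw [hn2, ← ENNReal.ofReal_mul (Nat.cast_nonneg n),
      ← ENNReal.ofReal_mul (Nat.cast_nonneg n), ← ENNReal.ofReal_mul (Real.exp_nonneg _)]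
    have h2e : (2:ℝ≥0∞) = ENNReal.ofReal 2 := by norm_num
    rw [h2e, ← ENNReal.ofReal_mul (by norm_num)]
    apply ENNReal.ofReal_le_ofReal
    rw [hBdef]
    have hsplit2 : Real.exp ((n:ℝ)*cF - L*t)
        = Real.exp ((n:ℝ)*cF) * Real.exp (-(L*t)) := by
      rw [← Real.exp_add]
      congr 1
      try ring
    rw [hsplit2]
    exact le_of_eq (by ring)
  have hμA : μ A ≤ ENNReal.ofReal B := by
    have h20 : (2:ℝ≥0∞) ≠ 0 := by norm_num
    have h2t : (2:ℝ≥0∞) ≠ ⊤ := by norm_num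
    exact (ENNReal.mul_le_mul_iff_right h20 h2t).mp hchain
  -- exponent comparison
  have hexp_le : (n:ℝ)*cF - L*t ≤ -(c₁*η/(2*(1+η))) * t * (1-b) := by
    rw [hcFdef, hLdef]
    have hna0 : 0 ≤ (n:ℝ)*a := by positivity
    have hstep : (n:ℝ)*a*(c₁*F) ≤ t*(1-b)/(1+η)*(c₁*F) := by
      apply mul_le_mul_of_nonneg_right _ (mul_nonneg hc₁0.le hF0.le)
      rw [le_div_iff₀ (by linarith : (0:ℝ) < 1+η)]
      nlinarith [hcond]
    have htb : 0 < t*(1-b) := mul_pos ht0 hb1'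
    have hstep2 : t*(1-b)/(1+η)*(c₁*F) ≤ t*(1-b)/(1+η)*(c₁*(1+η/2)) := by
      apply mul_le_mul_of_nonneg_left _ (by positivity)
      nlinarith [hFη, hc₁0]
    have hfin : t*(1-b)/(1+η)*(c₁*(1+η/2)) - c₁*(1-b)*t
        = -(c₁*η/(2*(1+η))) * t * (1-b) := by
      field_simp
      ring
    nlinarith [hstep, hstep2, hfin]
  have hB_le : B ≤ 2*((n:ℝ)*a)^2 * Real.exp (-(c₁*η/(2*(1+η))) * t * (1-b)) := by
    rw [hBdef]
    exact mul_le_mul_of_nonneg_left (Real.exp_le_exp.mpr hexp_le) (by positivity)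
  calc (μ A).toReal ≤ B := ENNReal.toReal_le_of_le_ofReal (by rw [hBdef]; positivity) hμA
    _ ≤ 2*((n:ℝ)*a)^2 * Real.exp (-(c₁*η/(2*(1+η))) * t * (1-b)) := hB_le
    _ = 2*((n:ℝ)*a)^2 * Real.exp (-(c₁*η/(2*(1+η))) * t * (1-b)) := rfl
end

section
/- For every A > 0, every λ with 0 < λ < 1 and every integer n ≥ 1, one has P( ζ_1 + ⋯ + ζ_n ≤ A ) ≤ exp( −λ ( n a / (1+λ) − (1−b) A ) ). -/
open MeasureTheory ProbabilityTheory

open Real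
lemma geo_mass {Ω : Type*} [MeasurableSpace Ω] (μ : Measure Ω)
    [IsProbabilityMeasure μ] (a b : ℝ) (ha : a ∈ Set.Ioo (0:ℝ) 1)
    (hb : b ∈ Set.Ioo (0:ℝ) 1) (Z : Ω → ℕ) (hm : Measurable Z)
    (htl : ∀ k : ℕ, 1 ≤ k → μ {ω | k ≤ Z ω} = ENNReal.ofReal (a * b ^ (k - 1)))
    (k : ℕ) : (μ {ω | Z ω = k + 1}).toReal = a * (1 - b) * b ^ k := by
  have hbpow : (0:ℝ) ≤ a * b ^ (k+1) := mul_nonneg ha.1.le (pow_nonneg hb.1.le _)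
  have hsplit : {ω | (k+1 : ℕ) ≤ Z ω} = {ω | Z ω = k+1} ∪ {ω | k+2 ≤ Z ω} := by
    ext ω; simp only [Set.mem_setOf_eq, Set.mem_union]; omega
  have hdisj : Disjoint {ω | Z ω = k+1} {ω | k+2 ≤ Z ω} := by
    rw [Set.disjoint_left]; intro ω h1 h2; simp only [Set.mem_setOf_eq] at h1 h2; omega
  have hms : MeasurableSet {ω | (k+2:ℕ) ≤ Z ω} := by
    have : {ω | (k+2:ℕ) ≤ Z ω} = Z ⁻¹' (Set.Ici (k+2)) := rfl
    rw [this]; exact hm measurableSet_Ici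
  have hadd : μ {ω | (k+1:ℕ) ≤ Z ω} = μ {ω | Z ω = k+1} + μ {ω | k+2 ≤ Z ω} := by
    rw [hsplit, measure_union hdisj hms]
  rw [htl (k+1) (by omega), htl (k+2) (by omega)] at hadd
  simp only [Nat.add_sub_cancel] at hadd
  have : k + 2 - 1 = k + 1 := by omega
  rw [this] at hadd
  have h2 := congrArg ENNReal.toReal hadd
  rw [ENNReal.toReal_add (measure_ne_top _ _) ENNReal.ofReal_ne_top,
    ENNReal.toReal_ofReal (mul_nonneg ha.1.le (pow_nonneg hb.1.le _)), ENNReal.toReal_ofReal hbpow] at h2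
  have : (μ {ω | Z ω = k + 1}).toReal = a * b ^ k - a * b ^ (k+1) := by linarith
  rw [this]; ring

lemma geo_mgf {Ω : Type*} [MeasurableSpace Ω] (μ : Measure Ω)
    [IsProbabilityMeasure μ] (a b : ℝ) (ha : a ∈ Set.Ioo (0:ℝ) 1)
    (hb : b ∈ Set.Ioo (0:ℝ) 1) (Z : Ω → ℕ) (hm : Measurable Z)
    (h0 : μ {ω | Z ω = 0} = ENNReal.ofReal (1 - a))
    (htl : ∀ k : ℕ, 1 ≤ k → μ {ω | k ≤ Z ω} = ENNReal.ofReal (a * b ^ (k - 1)))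
    (t : ℝ) (htneg : t < 0) :
    mgf (fun ω => (Z ω : ℝ)) μ t
      = (1 - a) + a * (1 - b) * exp t / (1 - b * exp t) := by
  set u : ℝ := exp t with hu
  have hu0 : 0 < u := exp_pos t
  have hu1 : u < 1 := exp_lt_one_iff.mpr htneg
  set ν : Measure ℕ := μ.map Z with hν
  haveI : IsProbabilityMeasure ν := Measure.isProbabilityMeasure_map hm.aemeasurable
  have hνk : ∀ k : ℕ, ν {k} = μ {ω | Z ω = k} := by
    intro k
    rw [hν, Measure.map_apply hm (measurableSet_singleton k)]
    rfl
  have hgmeas : Measurable fun k : ℕ => exp (t * k) := measurable_from_top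
  have hgint : Integrable (fun k : ℕ => exp (t * k)) ν := by
    refine (integrable_const (1:ℝ)).mono' hgmeas.aestronglyMeasurable ?_
    filter_upwards with k
    rw [norm_of_nonneg (exp_nonneg _)]
    exact exp_le_one_iff.mpr (mul_nonpos_of_nonpos_of_nonneg htneg.le (Nat.cast_nonneg k))
  have hmgf : mgf (fun ω => (Z ω : ℝ)) μ t = ∫ k : ℕ, exp (t * k) ∂ν := by
    rw [mgf, hν, integral_map hm.aemeasurable hgmeas.aestronglyMeasurable]
  rw [hmgf, integral_countable' hgint]
  have hterm : ∀ k : ℕ, (ν {k}).toReal • exp (t * (k:ℝ))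
      = (ν {k}).toReal * u ^ k := by
    intro k
    rw [smul_eq_mul, mul_comm t (k:ℝ), exp_nat_mul]
  have hsum : Summable fun k : ℕ => (ν {k}).toReal • exp (t * (k:ℝ)) := by
    refine Summable.of_nonneg_of_le (fun k => ?_) (fun k => ?_)
      (summable_geometric_of_lt_one hu0.le hu1)
    · rw [hterm k]; positivity
    · rw [hterm k]
      calc (ν {k}).toReal * u ^ k ≤ 1 * u ^ k := by
            apply mul_le_mul_of_nonneg_right _ (by positivity)
            exact ENNReal.toReal_le_of_le_ofReal one_pos.le (by simpa using prob_le_one)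
        _ = u ^ k := one_mul _
  simp only [measureReal_def]
  rw [Summable.tsum_eq_zero_add hsum]
  have h00 : (ν {0}).toReal • exp (t * ((0:ℕ):ℝ)) = 1 - a := by
    rw [hνk 0, h0, ENNReal.toReal_ofReal (by linarith [ha.2])]
    simp
  rw [h00]
  congr 1
  have hmass := geo_mass μ a b ha hb Z hm htl
  have hterm' : ∀ k : ℕ, (ν {k+1}).toReal • exp (t * ((k+1:ℕ):ℝ))
      = (a * (1 - b) * u) * (b * u) ^ k := by
    intro k
    rw [hterm (k+1), hνk (k+1), hmass k, mul_pow, pow_succ]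
    ring
  calc ∑' k : ℕ, (ν {k+1}).toReal • exp (t * ((k+1:ℕ):ℝ))
      = ∑' k : ℕ, (a * (1 - b) * u) * (b * u) ^ k := by
        exact tsum_congr hterm'
    _ = (a * (1 - b) * u) * (1 - b * u)⁻¹ := by
        rw [tsum_mul_left, tsum_geometric_of_lt_one (mul_nonneg hb.1.le hu0.le)
          (by nlinarith [hb.2])]
    _ = a * (1 - b) * u / (1 - b * u) := by rw [div_eq_mul_inv]

lemma geo_bound (a b lam : ℝ) (ha : a ∈ Set.Ioo (0:ℝ) 1) (hb : b ∈ Set.Ioo (0:ℝ) 1)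
    (hlam0 : 0 < lam) (hlam1 : lam < 1) :
    (1 - a) + a * (1 - b) * exp (-(lam * (1 - b))) / (1 - b * exp (-(lam * (1 - b))))
      ≤ exp (-(lam * a / (1 + lam))) := by
  obtain ⟨ha0, ha1⟩ := ha; obtain ⟨hb0, hb1⟩ := hb
  set s : ℝ := lam * (1 - b) with hs
  have hs0 : 0 < s := by nlinarith
  set u : ℝ := exp (-s) with hu
  have hu0 : 0 < u := exp_pos _
  have hu1 : u < 1 := exp_lt_one_iff.mpr (by linarith)
  have h1 : u * (1 + s) ≤ 1 := by
    have h2 : s + 1 ≤ exp s := add_one_le_exp s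
    have h3 : u = (exp s)⁻¹ := by rw [hu, exp_neg]
    rw [h3, inv_mul_le_iff₀ (exp_pos s), mul_one]
    linarith
  have hbu : 0 < 1 - b * u := by nlinarith
  have hM : (1 - a) + a * (1 - b) * u / (1 - b * u)
      = 1 - a * (1 - u) / (1 - b * u) := by
    field_simp
    ring
  rw [hM]
  have hq : lam * a / (1 + lam) ≤ a * (1 - u) / (1 - b * u) := by
    rw [div_le_div_iff₀ (by linarith) hbu]
    have h5 : a * (u * (1 + s)) ≤ a * 1 := mul_le_mul_of_nonneg_left h1 ha0.le
    rw [hs] at h5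
    nlinarith [h5]
  have h4 : (-(lam * a / (1 + lam))) + 1 ≤ exp (-(lam * a / (1 + lam))) :=
    add_one_le_exp _
  linarith

/-- Let `a, b ∈ (0,1)` and `(ζ_i)` be i.i.d. `ℕ`-valued random variables with
`P(ζ_1 = 0) = 1 - a` and `P(ζ_1 ≥ k) = a b^(k-1)` for `k ≥ 1`. Then for every `A > 0`,
every `0 < λ < 1` and every `n ≥ 1`,
`P(ζ_1 + ⋯ + ζ_n ≤ A) ≤ exp(-λ (n a / (1+λ) - (1-b) A))`. -/
theorem sumGeo_small {Ω : Type*} [MeasurableSpace Ω] (μ : Measure Ω)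
    [IsProbabilityMeasure μ] (a b : ℝ) (ha : a ∈ Set.Ioo (0:ℝ) 1)
    (hb : b ∈ Set.Ioo (0:ℝ) 1) (ζ : ℕ → Ω → ℕ)
    (hmeas : ∀ i, Measurable (ζ i))
    (hindep : iIndepFun ζ μ)
    (hzero : ∀ i, 1 ≤ i → μ {ω | ζ i ω = 0} = ENNReal.ofReal (1 - a))
    (htail : ∀ i k, 1 ≤ i → 1 ≤ k → μ {ω | k ≤ ζ i ω} = ENNReal.ofReal (a * b ^ (k - 1))) :
    ∀ A : ℝ, 0 < A → ∀ lam : ℝ, 0 < lam → lam < 1 → ∀ n : ℕ, 1 ≤ n →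
      (μ {ω | (∑ i ∈ Finset.Icc 1 n, (ζ i ω : ℝ)) ≤ A}).toReal
        ≤ Real.exp (-lam * ((n : ℝ) * a / (1 + lam) - (1 - b) * A)) := by
  intro A hA lam hlam0 hlam1 n hn
  set t : ℝ := -(lam * (1 - b)) with htdef
  have htneg : t < 0 := by
    have : 0 < lam * (1 - b) := by nlinarith [hb.2]
    linarith
  set X : ℕ → Ω → ℝ := fun i ω => (ζ i ω : ℝ) with hX
  have hXmeas : ∀ i, Measurable (X i) := fun i =>
    measurable_from_top.comp (hmeas i)
  have hindepX : iIndepFun X μ :=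
    hindep.comp (fun _ => (Nat.cast : ℕ → ℝ)) (fun _ => measurable_from_top)
  have hint : ∀ i, Integrable (fun ω => exp (t * X i ω)) μ := by
    intro i
    refine (integrable_const (1:ℝ)).mono'
      ((hXmeas i).const_mul t).exp.aestronglyMeasurable ?_
    filter_upwards with ω
    rw [norm_of_nonneg (exp_nonneg _)]
    exact exp_le_one_iff.mpr (mul_nonpos_of_nonpos_of_nonneg htneg.le (Nat.cast_nonneg _))
  have hintS : Integrable (fun ω => exp (t * (∑ i ∈ Finset.Icc 1 n, X i) ω)) μ :=
    hindepX.integrable_exp_mul_sum hXmeas (fun i _ => hint i)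
  have hset : {ω | (∑ i ∈ Finset.Icc 1 n, X i) ω ≤ A}
      = {ω | (∑ i ∈ Finset.Icc 1 n, (ζ i ω : ℝ)) ≤ A} := by
    ext ω; simp [Finset.sum_apply, hX]
  have hmarkov := measure_le_le_exp_mul_mgf (μ := μ) (X := ∑ i ∈ Finset.Icc 1 n, X i)
    A htneg.le hintS
  rw [hset] at hmarkov
  refine hmarkov.trans ?_
  rw [hindepX.mgf_sum hXmeas (Finset.Icc 1 n)]
  have hone : ∀ i ∈ Finset.Icc 1 n, mgf (X i) μ t ≤ exp (-(lam * a / (1 + lam))) := by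
    intro i hi
    rw [Finset.mem_Icc] at hi
    have heq := geo_mgf μ a b ha hb (ζ i) (hmeas i) (hzero i hi.1)
      (fun k hk => htail i k hi.1 hk) t htneg
    rw [hX]
    rw [heq, htdef]
    exact geo_bound a b lam ha hb hlam0 hlam1
  have hprod : ∏ i ∈ Finset.Icc 1 n, mgf (X i) μ t
      ≤ exp (-(lam * a / (1 + lam))) ^ n := by
    calc ∏ i ∈ Finset.Icc 1 n, mgf (X i) μ t
        ≤ ∏ i ∈ Finset.Icc 1 n, exp (-(lam * a / (1 + lam))) :=
          Finset.prod_le_prod (fun i _ => mgf_nonneg) hone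
      _ = exp (-(lam * a / (1 + lam))) ^ (Finset.Icc 1 n).card := Finset.prod_const _
      _ = exp (-(lam * a / (1 + lam))) ^ n := by rw [Nat.card_Icc]; norm_num
  calc exp (-t * A) * ∏ i ∈ Finset.Icc 1 n, mgf (X i) μ t
      ≤ exp (-t * A) * exp (-(lam * a / (1 + lam))) ^ n := by
        exact mul_le_mul_of_nonneg_left hprod (exp_nonneg _)
    _ = exp (-t * A + n * (-(lam * a / (1 + lam)))) := by
        rw [← exp_nat_mul, ← exp_add]
    _ = exp (-lam * ((n : ℝ) * a / (1 + lam) - (1 - b) * A)) := by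
        congr 1
        rw [htdef]
        ring
end

section
/- For every δ ∈ [0,1) there exist a constant C > 0 and A₀ > 0 (depending only on δ and the law of ξ_1) such that for every real A ≥ A₀, the sum over integers k with 1 ≤ k ≤ A^{1+δ} of P( S_k ≥ A ) is at most exp(−C A^{1−δ}). -/
open MeasureTheory ProbabilityTheory Filter Topology

lemma aux_exp_le (u : ℝ) : Real.exp u ≤ 1 + u + u ^ 2 * Real.exp |u| := by
  have he : (1 : ℝ) ≤ Real.exp |u| := Real.one_le_exp (abs_nonneg u)
  rcases le_or_gt |u| 1 with h | h
  · have hb := Real.exp_bound h (by norm_num : 0 < 2)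
    have hs : ∑ i ∈ Finset.range 2, u ^ i / (Nat.factorial i) = 1 + u := by
      simp [Finset.sum_range_succ]
    rw [hs] at hb
    have h2 : |u| ^ 2 = u ^ 2 := sq_abs u
    have hb' : Real.exp u - (1 + u) ≤ u ^ 2 * (3 / (2 * 2)) := by
      have := (abs_le.mp hb).2
      simpa [h2, Nat.factorial] using this
    nlinarith [sq_nonneg u]
  · rcases le_or_gt 0 u with hu | hu
    · have h1 : 1 < u := by rwa [abs_of_nonneg hu] at h
      have : Real.exp |u| = Real.exp u := by rw [abs_of_nonneg hu]
      rw [this]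
      nlinarith [mul_pos (sub_pos.mpr h1) (Real.exp_pos u),
        mul_pos (mul_pos (sub_pos.mpr h1) (lt_trans one_pos h1)) (Real.exp_pos u)]
    · have h1 : 1 < -u := by rwa [abs_of_neg hu] at h
      have h2 : Real.exp u ≤ 1 := Real.exp_le_one_iff.mpr hu.le
      nlinarith [sq_nonneg u]

lemma aux_sq_le {c : ℝ} (hc : 0 < c) (x : ℝ) (hx : 0 ≤ x) :
    x ^ 2 ≤ 2 / c ^ 2 * Real.exp (c * x) := by
  have h := Real.quadratic_le_exp_of_nonneg (mul_nonneg hc.le hx)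
  rw [div_mul_eq_mul_div, le_div_iff₀ (by positivity)]
  nlinarith [mul_nonneg hc.le hx]

/-- The random walk `S_n = ξ_1 + ⋯ + ξ_n` (with `S_0 = 0`). -/
noncomputable def walkS {Ω : Type*} (ξ : ℕ → Ω → ℝ) (n : ℕ) (ω : Ω) : ℝ :=
  ∑ i ∈ Finset.range n, ξ i ω

/-- `S̄_n = max_{0 ≤ k ≤ n} S_k`. -/
noncomputable def walkMax {Ω : Type*} (ξ : ℕ → Ω → ℝ) (n : ℕ) (ω : Ω) : ℝ :=
  (Finset.range (n + 1)).sup' (Finset.nonempty_range_iff.mpr (Nat.succ_ne_zero n))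
    fun k => walkS ξ k ω

/-- `S̲_n = min_{0 ≤ k ≤ n} S_k`. -/
noncomputable def walkMin {Ω : Type*} (ξ : ℕ → Ω → ℝ) (n : ℕ) (ω : Ω) : ℝ :=
  (Finset.range (n + 1)).inf' (Finset.nonempty_range_iff.mpr (Nat.succ_ne_zero n))
    fun k => walkS ξ k ω

set_option maxHeartbeats 1000000 in
theorem sum_S_large_bound
    {Ω : Type*} [MeasurableSpace Ω] (μ : Measure Ω) [IsProbabilityMeasure μ]
    (ξ : ℕ → Ω → ℝ) (hmeas : ∀ i, Measurable (ξ i))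
    (hindep : iIndepFun ξ μ)
    (hident : ∀ i, IdentDistrib (ξ i) (ξ 0) μ μ)
    (hmean : ∫ ω, ξ 0 ω ∂μ = 0)
    (hvar_int : Integrable (fun ω => (ξ 0 ω) ^ 2) μ)
    (hvar_pos : 0 < ∫ ω, (ξ 0 ω) ^ 2 ∂μ)
    (hexp : ∃ δ₀ : ℝ, 0 < δ₀ ∧
      Integrable (fun ω => Real.exp (-δ₀ * ξ 0 ω)) μ ∧
      Integrable (fun ω => Real.exp ((1 + δ₀) * ξ 0 ω)) μ)
    :
    ∀ δ : ℝ, 0 ≤ δ → δ < 1 → ∃ C : ℝ, 0 < C ∧ ∃ A₀ : ℝ, 0 < A₀ ∧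
      ∀ A : ℝ, A₀ ≤ A →
        ∑ k ∈ Finset.Icc 1 ⌊A ^ (1 + δ)⌋₊, (μ {ω | A ≤ walkS ξ k ω}).toReal
          ≤ Real.exp (-C * A ^ (1 - δ)) := by
  intro δ hδ0 hδ1
  obtain ⟨δ₀, hδ₀, hIm, hIp⟩ := hexp
  set c : ℝ := δ₀ / 2 with hc_def
  have hc : 0 < c := by positivity
  -- dominating function
  set g : Ω → ℝ := fun ω => 1 + Real.exp ((1 + δ₀) * ξ 0 ω) + Real.exp (-δ₀ * ξ 0 ω)
    with hg_def
  have hg_int : Integrable g μ := ((integrable_const 1).add hIp).add hIm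
  have hg_one : ∀ ω, (1 : ℝ) ≤ g ω := fun ω => by
    have := (Real.exp_pos ((1 + δ₀) * ξ 0 ω)).le
    have := (Real.exp_pos (-δ₀ * ξ 0 ω)).le
    simp only [hg_def]; linarith
  have hg_dom : ∀ ω, Real.exp (δ₀ * |ξ 0 ω|) ≤ g ω := by
    intro ω
    rcases le_or_gt 0 (ξ 0 ω) with h | h
    · rw [abs_of_nonneg h]
      have h1 : δ₀ * ξ 0 ω ≤ (1 + δ₀) * ξ 0 ω := by nlinarith
      have h2 := Real.exp_le_exp.mpr h1
      have := (Real.exp_pos (-δ₀ * ξ 0 ω)).le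
      simp only [hg_def]; linarith
    · rw [abs_of_neg h]
      have h2 : Real.exp (δ₀ * -ξ 0 ω) = Real.exp (-δ₀ * ξ 0 ω) := by ring_nf
      have := (Real.exp_pos ((1 + δ₀) * ξ 0 ω)).le
      simp only [hg_def, h2]; linarith
  -- integrability of exp(t ξ₀) for 0 ≤ t ≤ δ₀
  have h_exp_int : ∀ t : ℝ, 0 ≤ t → t ≤ δ₀ →
      Integrable (fun ω => Real.exp (t * ξ 0 ω)) μ := by
    intro t ht0 ht1
    refine hg_int.mono' (((hmeas 0).const_mul t).exp.aestronglyMeasurable)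
      (ae_of_all _ fun ω => ?_)
    rw [Real.norm_eq_abs, abs_of_pos (Real.exp_pos _)]
    refine le_trans (Real.exp_le_exp.mpr ?_) (hg_dom ω)
    calc t * ξ 0 ω ≤ t * |ξ 0 ω| := by
          exact mul_le_mul_of_nonneg_left (le_abs_self _) ht0
      _ ≤ δ₀ * |ξ 0 ω| := mul_le_mul_of_nonneg_right ht1 (abs_nonneg _)
  -- ξ₀ is integrable
  have hxi_int : Integrable (ξ 0) μ := by
    refine ((integrable_const (1 : ℝ)).add hvar_int).mono'
      (hmeas 0).aestronglyMeasurable (ae_of_all _ fun ω => ?_)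
    simp only [Real.norm_eq_abs, Pi.add_apply]
    nlinarith [sq_abs (ξ 0 ω), sq_nonneg (|ξ 0 ω| - 1), abs_nonneg (ξ 0 ω)]
  set K : ℝ := 2 / c ^ 2 * ∫ ω, g ω ∂μ with hK_def
  have hgI : (1 : ℝ) ≤ ∫ ω, g ω ∂μ := by
    have := integral_mono (integrable_const (1 : ℝ)) hg_int hg_one
    simpa using this
  have hK_pos : 0 < K := by
    have : (0 : ℝ) < 2 / c ^ 2 := by positivity
    nlinarith
  -- mgf bound: mgf (ξ 0) μ t ≤ exp (K t²) for 0 ≤ t ≤ c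
  have hmgf_bound : ∀ t : ℝ, 0 ≤ t → t ≤ c → mgf (ξ 0) μ t ≤ Real.exp (K * t ^ 2) := by
    intro t ht0 htc
    have htδ : t ≤ δ₀ := by linarith [htc, hc]
    have hptw : ∀ ω, (ξ 0 ω) ^ 2 * Real.exp (t * |ξ 0 ω|) ≤ 2 / c ^ 2 * g ω := by
      intro ω
      have h1 : (ξ 0 ω) ^ 2 ≤ 2 / c ^ 2 * Real.exp (c * |ξ 0 ω|) := by
        have := aux_sq_le hc |ξ 0 ω| (abs_nonneg _)
        rwa [sq_abs] at this
      have h2 : Real.exp (t * |ξ 0 ω|) ≤ Real.exp (c * |ξ 0 ω|) :=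
        Real.exp_le_exp.mpr (mul_le_mul_of_nonneg_right htc (abs_nonneg _))
      have h3 : Real.exp (c * |ξ 0 ω|) * Real.exp (c * |ξ 0 ω|) = Real.exp (δ₀ * |ξ 0 ω|) := by
        rw [← Real.exp_add]; congr 1; rw [hc_def]; ring
      calc (ξ 0 ω) ^ 2 * Real.exp (t * |ξ 0 ω|)
          ≤ (2 / c ^ 2 * Real.exp (c * |ξ 0 ω|)) * Real.exp (c * |ξ 0 ω|) := by
            refine mul_le_mul h1 h2 (Real.exp_pos _).le ?_
            positivity
        _ = 2 / c ^ 2 * Real.exp (δ₀ * |ξ 0 ω|) := by rw [mul_assoc, h3]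
        _ ≤ 2 / c ^ 2 * g ω := by
            refine mul_le_mul_of_nonneg_left (hg_dom ω) ?_; positivity
    have hquad_int : Integrable (fun ω => (ξ 0 ω) ^ 2 * Real.exp (t * |ξ 0 ω|)) μ := by
      refine (hg_int.const_mul (2 / c ^ 2)).mono'
        (((hmeas 0).pow_const 2).mul (((hmeas 0).abs.const_mul t).exp)).aestronglyMeasurable
        (ae_of_all _ fun ω => ?_)
      rw [Real.norm_eq_abs, abs_of_nonneg (by positivity)]
      exact hptw ω
    have hint_exp := h_exp_int t ht0 htδ
    have hint_rhs : Integrable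
        (fun ω => 1 + t * ξ 0 ω + t ^ 2 * ((ξ 0 ω) ^ 2 * Real.exp (t * |ξ 0 ω|))) μ :=
      ((integrable_const 1).add (hxi_int.const_mul t)).add (hquad_int.const_mul (t ^ 2))
    have step1 : mgf (ξ 0) μ t ≤
        ∫ ω, (1 + t * ξ 0 ω + t ^ 2 * ((ξ 0 ω) ^ 2 * Real.exp (t * |ξ 0 ω|))) ∂μ := by
      refine integral_mono hint_exp hint_rhs fun ω => ?_
      have := aux_exp_le (t * ξ 0 ω)
      have habs : |t * ξ 0 ω| = t * |ξ 0 ω| := by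
        rw [abs_mul, abs_of_nonneg ht0]
      rw [habs] at this
      calc Real.exp (t * ξ 0 ω)
          ≤ 1 + t * ξ 0 ω + (t * ξ 0 ω) ^ 2 * Real.exp (t * |ξ 0 ω|) := this
        _ = 1 + t * ξ 0 ω + t ^ 2 * ((ξ 0 ω) ^ 2 * Real.exp (t * |ξ 0 ω|)) := by ring
    have step2 : ∫ ω, (1 + t * ξ 0 ω + t ^ 2 * ((ξ 0 ω) ^ 2 * Real.exp (t * |ξ 0 ω|))) ∂μ
        = 1 + t ^ 2 * ∫ ω, (ξ 0 ω) ^ 2 * Real.exp (t * |ξ 0 ω|) ∂μ := by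
      have h1 : Integrable (fun ω => 1 + t * ξ 0 ω) μ :=
        (integrable_const 1).add (hxi_int.const_mul t)
      have h2 : Integrable (fun ω => t ^ 2 * ((ξ 0 ω) ^ 2 * Real.exp (t * |ξ 0 ω|))) μ :=
        hquad_int.const_mul (t ^ 2)
      rw [integral_add h1 h2,
        integral_add (integrable_const (1:ℝ)) (hxi_int.const_mul t : Integrable (fun ω => t * ξ 0 ω) μ),
        integral_const, integral_const_mul, integral_const_mul, hmean]
      simp
    have step3 : ∫ ω, (ξ 0 ω) ^ 2 * Real.exp (t * |ξ 0 ω|) ∂μ ≤ 2 / c ^ 2 * ∫ ω, g ω ∂μ := by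
      rw [← integral_const_mul]
      exact integral_mono hquad_int (hg_int.const_mul _) hptw
    calc mgf (ξ 0) μ t ≤ 1 + t ^ 2 * ∫ ω, (ξ 0 ω) ^ 2 * Real.exp (t * |ξ 0 ω|) ∂μ := by
          rw [← step2]; exact step1
      _ ≤ 1 + t ^ 2 * (2 / c ^ 2 * ∫ ω, g ω ∂μ) := by
          refine (add_le_add_iff_left 1).mpr (mul_le_mul_of_nonneg_left step3 (by positivity))
      _ = K * t ^ 2 + 1 := by rw [hK_def]; ring
      _ ≤ Real.exp (K * t ^ 2) := Real.add_one_le_exp _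
  -- choose θ and C
  set θ : ℝ := min c (1 / (2 * K)) with hθ_def
  have hθ_pos : 0 < θ := lt_min hc (by positivity)
  have hθc : θ ≤ c := min_le_left _ _
  have hθK : K * θ ≤ 1 / 2 := by
    have h1 : θ ≤ 1 / (2 * K) := min_le_right _ _
    rw [le_div_iff₀ (by positivity)] at h1
    nlinarith
  have h1δ : 0 < 1 - δ := by linarith
  set r : ℝ := (1 + δ) / (1 - δ) with hr_def
  -- choose A₀
  have htend : Tendsto (fun x : ℝ => x ^ r * Real.exp (-(θ / 4) * x)) atTop (𝓝 0) :=
    tendsto_rpow_mul_exp_neg_mul_atTop_nhds_zero r (θ / 4) (by positivity)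
  have hev : ∀ᶠ x : ℝ in atTop, x ^ r * Real.exp (-(θ / 4) * x) < 1 :=
    htend.eventually (gt_mem_nhds one_pos)
  obtain ⟨x₁, hx₁⟩ := eventually_atTop.mp hev
  have hevA : ∀ᶠ A : ℝ in atTop, x₁ ≤ A ^ (1 - δ) ∧ 1 ≤ A :=
    ((tendsto_rpow_atTop h1δ).eventually_ge_atTop x₁).and (eventually_ge_atTop 1)
  obtain ⟨A₀, hA₀⟩ := eventually_atTop.mp hevA
  refine ⟨θ / 4, by positivity, max A₀ 1,
    lt_of_lt_of_le one_pos (le_max_right _ _), fun A hA => ?_⟩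
  have hA1 : (1 : ℝ) ≤ A := le_trans (le_max_right _ _) hA
  have hApos : 0 < A := lt_of_lt_of_le one_pos hA1
  obtain ⟨hx₁A, -⟩ := hA₀ A (le_trans (le_max_left _ _) hA)
  have hAd_pos : 0 < A ^ (-δ) := Real.rpow_pos_of_pos hApos _
  have hA1δ_pos : 0 < A ^ (1 - δ) := Real.rpow_pos_of_pos hApos _
  have hA1δ'_pos : 0 < A ^ (1 + δ) := Real.rpow_pos_of_pos hApos _
  set t : ℝ := θ * A ^ (-δ) with ht_def
  have ht_pos : 0 < t := mul_pos hθ_pos hAd_pos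
  have htθ : t ≤ θ := by
    have h := Real.rpow_le_one_of_one_le_of_nonpos hA1 (neg_nonpos.mpr hδ0)
    rw [ht_def]; nlinarith
  have htc : t ≤ c := le_trans htθ hθc
  have htδ₀ : t ≤ δ₀ := le_trans htc (by rw [hc_def]; linarith)
  have e1 : A ^ (-δ) * A = A ^ (1 - δ) := by
    have h := Real.rpow_add hApos (-δ) 1
    rw [Real.rpow_one] at h
    rw [← h]; congr 1; ring
  have e2 : A ^ (1 + δ) * (A ^ (-δ) * A ^ (-δ)) = A ^ (1 - δ) := by
    rw [← Real.rpow_add hApos, ← Real.rpow_add hApos]; congr 1; ring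
  have hterm : ∀ k ∈ Finset.Icc 1 ⌊A ^ (1 + δ)⌋₊,
      (μ {ω | A ≤ walkS ξ k ω}).toReal ≤ Real.exp (-(θ / 2) * A ^ (1 - δ)) := by
    intro k hk
    have hkN : (k : ℝ) ≤ A ^ (1 + δ) := by
      have hk' : k ≤ ⌊A ^ (1 + δ)⌋₊ := (Finset.mem_Icc.mp hk).2
      exact le_trans (Nat.cast_le.mpr hk') (Nat.floor_le hA1δ'_pos.le)
    have hmeas_u : Measurable (fun x : ℝ => Real.exp (t * x)) :=
      (measurable_id.const_mul t).exp
    have hint_i : ∀ i ∈ Finset.range k, Integrable (fun ω => Real.exp (t * ξ i ω)) μ := by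
      intro i _
      exact ((hident i).comp hmeas_u).integrable_iff.mpr (h_exp_int t ht_pos.le htδ₀)
    have hint_sum := hindep.integrable_exp_mul_sum hmeas hint_i
    have hset : {ω | A ≤ walkS ξ k ω} = {ω | A ≤ (∑ i ∈ Finset.range k, ξ i) ω} := by
      ext ω; simp [walkS, Finset.sum_apply]
    have hcher := measure_ge_le_exp_mul_mgf (X := ∑ i ∈ Finset.range k, ξ i) (μ := μ)
      A ht_pos.le hint_sum
    have hmgf_eq : mgf (∑ i ∈ Finset.range k, ξ i) μ t = mgf (ξ 0) μ t ^ k := by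
      rw [hindep.mgf_sum hmeas]
      have hmc : ∀ i ∈ Finset.range k, mgf (ξ i) μ t = mgf (ξ 0) μ t := fun i _ =>
        ((hident i).comp hmeas_u).integral_eq
      rw [Finset.prod_congr rfl hmc, Finset.prod_const, Finset.card_range]
    rw [hset]
    refine le_trans hcher ?_
    rw [hmgf_eq]
    have hb := hmgf_bound t ht_pos.le htc
    calc Real.exp (-t * A) * mgf (ξ 0) μ t ^ k
        ≤ Real.exp (-t * A) * Real.exp (K * t ^ 2) ^ k :=
          mul_le_mul_of_nonneg_left (pow_le_pow_left₀ mgf_nonneg hb k) (Real.exp_pos _).le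
      _ = Real.exp (-t * A + k * (K * t ^ 2)) := by
          rw [← Real.exp_nat_mul, ← Real.exp_add]
      _ ≤ Real.exp (-(θ / 2) * A ^ (1 - δ)) := by
          refine Real.exp_le_exp.mpr ?_
          have hk2 : (k : ℝ) * (K * t ^ 2) ≤ A ^ (1 + δ) * (K * t ^ 2) :=
            mul_le_mul_of_nonneg_right hkN (by positivity)
          have heq1 : t * A = θ * A ^ (1 - δ) := by rw [ht_def, mul_assoc, e1]
          have heq2 : A ^ (1 + δ) * (K * t ^ 2) = K * θ ^ 2 * A ^ (1 - δ) := by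
            rw [ht_def]; linear_combination K * θ ^ 2 * e2
          have hfinal : K * θ ^ 2 * A ^ (1 - δ) ≤ θ / 2 * A ^ (1 - δ) := by
            have : K * θ ^ 2 ≤ θ / 2 := by nlinarith
            exact mul_le_mul_of_nonneg_right this hA1δ_pos.le
          linarith [hk2, heq2.trans_le hfinal]
  calc ∑ k ∈ Finset.Icc 1 ⌊A ^ (1 + δ)⌋₊, (μ {ω | A ≤ walkS ξ k ω}).toReal
      ≤ (Finset.Icc 1 ⌊A ^ (1 + δ)⌋₊).card • Real.exp (-(θ / 2) * A ^ (1 - δ)) :=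
        Finset.sum_le_card_nsmul _ _ _ hterm
    _ = (⌊A ^ (1 + δ)⌋₊ : ℝ) * Real.exp (-(θ / 2) * A ^ (1 - δ)) := by
        rw [nsmul_eq_mul, Nat.card_Icc]; simp
    _ ≤ A ^ (1 + δ) * Real.exp (-(θ / 2) * A ^ (1 - δ)) :=
        mul_le_mul_of_nonneg_right (Nat.floor_le hA1δ'_pos.le) (Real.exp_pos _).le
    _ ≤ Real.exp (θ / 4 * A ^ (1 - δ)) * Real.exp (-(θ / 2) * A ^ (1 - δ)) := by
        refine mul_le_mul_of_nonneg_right ?_ (Real.exp_pos _).le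
        have hx := hx₁ _ hx₁A
        have hxp : A ^ (1 + δ) = (A ^ (1 - δ)) ^ r := by
          rw [← Real.rpow_mul hApos.le]
          congr 1
          rw [hr_def]; field_simp [h1δ.ne']
        rw [hxp]
        have hinv : Real.exp (-(θ / 4) * A ^ (1 - δ))
            = (Real.exp (θ / 4 * A ^ (1 - δ)))⁻¹ := by
          rw [← Real.exp_neg]; ring_nf
        rw [hinv, ← div_eq_mul_inv] at hx
        exact ((div_lt_one (Real.exp_pos _)).mp hx).le
    _ = Real.exp (-(θ / 4) * A ^ (1 - δ)) := by
        rw [← Real.exp_add]; congr 1; ring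
end

section
/- There exists a constant C > 0 (depending only on the law of ξ_1) such that for every A > 0, the series ∑_{n≥0} E[ e^{S_n − A} · 1{ S̲_n ≥ 0, S_n ≤ A } ] is at most C. -/
open MeasureTheory ProbabilityTheory Filter

set_option linter.unusedSectionVars false
set_option linter.unusedVariables false

section aux
variable {Ω : Type*} [MeasurableSpace Ω] (μ : Measure Ω) [IsProbabilityMeasure μ]
  (ξ : ℕ → Ω → ℝ)

lemma joint_map_eq_pi (hmeas : ∀ i, Measurable (ξ i))
    (hindep : iIndepFun ξ μ)
    (hident : ∀ i, IdentDistrib (ξ i) (ξ 0) μ μ)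
    (n : ℕ) (σ : Fin n → ℕ) (hσ : Function.Injective σ) :
    μ.map (fun ω (i : Fin n) => ξ (σ i) ω) = Measure.pi (fun _ : Fin n => μ.map (ξ 0)) := by
  symm
  apply Measure.pi_eq
  intro s hs
  have hX : Measurable (fun ω (i : Fin n) => ξ (σ i) ω) :=
    measurable_pi_lambda _ fun i => hmeas (σ i)
  rw [Measure.map_apply hX (MeasurableSet.univ_pi hs)]
  classical
  set sets : ℕ → Set ℝ := Function.extend σ s (fun _ => Set.univ) with hsets
  have hset_eq : ∀ i : Fin n, sets (σ i) = s i := fun i => hσ.extend_apply _ _ i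
  have hpre : (fun ω (i : Fin n) => ξ (σ i) ω) ⁻¹' (Set.univ.pi s)
      = ⋂ j ∈ Finset.image σ Finset.univ, ξ j ⁻¹' sets j := by
    ext ω
    simp only [Set.mem_preimage, Set.mem_univ_pi, Set.mem_iInter, Finset.mem_image,
      Finset.mem_univ, true_and]
    constructor
    · rintro h j ⟨i, rfl⟩
      rw [hset_eq i]; exact h i
    · intro h i
      have := h (σ i) ⟨i, rfl⟩
      rwa [hset_eq i] at this
  rw [hpre, hindep.measure_inter_preimage_eq_mul _ (fun j hj => ?_)]
  · rw [Finset.prod_image (fun a _ b _ h => hσ h)]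
    refine Finset.prod_congr rfl fun i _ => ?_
    rw [hset_eq i, (hident (σ i)).measure_mem_eq (hs i),
      Measure.map_apply (hmeas 0) (hs i)]
  · rcases Finset.mem_image.mp hj with ⟨i, _, rfl⟩
    rw [hset_eq i]; exact hs i

end aux

section vs
variable {n : ℕ}

/-- partial sum of the first `k` coordinates of a vector. -/
def vS (n k : ℕ) (x : Fin n → ℝ) : ℝ :=
  ∑ i ∈ Finset.univ.filter (fun i : Fin n => (i : ℕ) < k), x i

lemma vS_zero (x : Fin n → ℝ) : vS n 0 x = 0 := by
  simp [vS]

lemma measurable_vS (k : ℕ) : Measurable (vS n k) :=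
  Finset.measurable_sum _ fun i _ => measurable_pi_apply i

lemma walkS_eq_vS {Ω : Type*} (ξ : ℕ → Ω → ℝ) (ω : Ω) {k : ℕ} (hk : k ≤ n) :
    walkS ξ k ω = vS n k (fun i : Fin n => ξ (i : ℕ) ω) := by
  classical
  unfold walkS vS
  refine (Finset.sum_bij' (fun (m : ℕ) (hm : m ∈ Finset.range k) =>
      (⟨m, lt_of_lt_of_le (Finset.mem_range.mp hm) hk⟩ : Fin n))
    (fun (i : Fin n) (hi : _) => (i : ℕ)) ?_ ?_ ?_ ?_ ?_)
  · intro m hm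
    simp [Finset.mem_range.mp hm]
  · intro i hi
    simp only [Finset.mem_filter] at hi
    simp [hi.2]
  · intro m hm; rfl
  · intro i hi; rfl
  · intro m hm; rfl

lemma vS_rev (x : Fin n → ℝ) {k : ℕ} (hk : k ≤ n) :
    vS n k (fun i => x (Fin.rev i)) = vS n n x - vS n (n - k) x := by
  classical
  have h1 : vS n k (fun i => x (Fin.rev i))
      = ∑ i ∈ Finset.univ.filter (fun i : Fin n => ¬ ((i : ℕ) < n - k)), x i := by
    unfold vS
    refine Finset.sum_bij' (fun (i : Fin n) (_ : _) => Fin.rev i)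
      (fun (i : Fin n) (_ : _) => Fin.rev i) ?_ ?_ ?_ ?_ ?_
    · intro i hi
      simp only [Finset.mem_filter, Finset.mem_univ, true_and] at hi ⊢
      have := i.isLt
      simp only [Fin.val_rev]
      omega
    · intro i hi
      simp only [Finset.mem_filter, Finset.mem_univ, true_and] at hi ⊢
      have := i.isLt
      simp only [Fin.val_rev]
      omega
    · intro i _; exact Fin.rev_rev i
    · intro i _; exact Fin.rev_rev i
    · intro i _; rfl
  rw [h1, eq_sub_iff_add_eq]
  unfold vS
  rw [add_comm, Finset.sum_filter_add_sum_filter_not]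
  refine (Finset.sum_congr ?_ fun _ _ => rfl).symm
  ext i
  simp [i.isLt]

lemma vS_full (x : Fin n → ℝ) : vS n n x = ∑ i, x i := by
  unfold vS
  refine Finset.sum_congr ?_ fun _ _ => rfl
  ext i; simp [i.isLt]

end vs

section dual
variable {Ω : Type*} [MeasurableSpace Ω] (μ : Measure Ω) [IsProbabilityMeasure μ]
  (ξ : ℕ → Ω → ℝ) (hmeas : ∀ i, Measurable (ξ i))
  (hindep : iIndepFun ξ μ)
  (hident : ∀ i, IdentDistrib (ξ i) (ξ 0) μ μ)

lemma walkMin_nonneg_iff (n : ℕ) (ω : Ω) :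
    0 ≤ walkMin ξ n ω ↔ ∀ k ≤ n, 0 ≤ walkS ξ k ω := by
  unfold walkMin
  rw [Finset.le_inf'_iff]
  constructor
  · intro h k hk; exact h k (Finset.mem_range.mpr (Nat.lt_succ_of_le hk))
  · intro h k hk; exact h k (Nat.lt_succ_iff.mp (Finset.mem_range.mp hk))

include hmeas hindep hident in
lemma lintegral_rev (n : ℕ) {G : (Fin n → ℝ) → ENNReal} (hG : Measurable G) :
    ∫⁻ ω, G (fun i => ξ ((Fin.rev i : Fin n) : ℕ) ω) ∂μ
      = ∫⁻ ω, G (fun i => ξ ((i : Fin n) : ℕ) ω) ∂μ := by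
  have hrevinj : Function.Injective (fun i : Fin n => ((Fin.rev i : Fin n) : ℕ)) := by
    intro a b h
    exact Fin.rev_injective (Fin.val_injective h)
  have h1 := joint_map_eq_pi μ ξ hmeas hindep hident n (fun i => (i : ℕ)) Fin.val_injective
  have h2 := joint_map_eq_pi μ ξ hmeas hindep hident n _ hrevinj
  have hX1 : Measurable (fun ω (i : Fin n) => ξ (i : ℕ) ω) :=
    measurable_pi_lambda _ fun i => hmeas _
  have hX2 : Measurable (fun ω (i : Fin n) => ξ ((Fin.rev i : Fin n) : ℕ) ω) :=
    measurable_pi_lambda _ fun i => hmeas _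
  rw [← lintegral_map hG hX1, ← lintegral_map hG hX2, h1, h2]

include hmeas hindep hident in
lemma dual_step (A : ℝ) (n : ℕ) :
    ∫⁻ ω, Set.indicator {ω | 0 ≤ walkMin ξ n ω ∧ walkS ξ n ω ≤ A}
        (fun ω => ENNReal.ofReal (Real.exp (walkS ξ n ω - A))) ω ∂μ
      = ∫⁻ ω, Set.indicator {ω | (∀ k ≤ n, walkS ξ k ω ≤ walkS ξ n ω) ∧ walkS ξ n ω ≤ A}
        (fun ω => ENNReal.ofReal (Real.exp (walkS ξ n ω - A))) ω ∂μ := by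
  classical
  set G : (Fin n → ℝ) → ENNReal := fun x =>
    Set.indicator {x : Fin n → ℝ | (∀ k ≤ n, vS n k x ≤ vS n n x) ∧ vS n n x ≤ A}
      (fun x => ENNReal.ofReal (Real.exp (vS n n x - A))) x with hGdef
  have hsetm : MeasurableSet {x : Fin n → ℝ | (∀ k ≤ n, vS n k x ≤ vS n n x) ∧ vS n n x ≤ A} := by
    have hrw : {x : Fin n → ℝ | (∀ k ≤ n, vS n k x ≤ vS n n x) ∧ vS n n x ≤ A}
        = (⋂ (k : ℕ) (_ : k ≤ n), {x | vS n k x ≤ vS n n x}) ∩ {x | vS n n x ≤ A} := by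
      ext x; simp [Set.mem_iInter]
    rw [hrw]
    exact (MeasurableSet.iInter fun k => MeasurableSet.iInter fun _ =>
      measurableSet_le (measurable_vS k) (measurable_vS n)).inter
      (measurableSet_le (measurable_vS n) measurable_const)
  have hG : Measurable G :=
    Measurable.indicator
      (ENNReal.measurable_ofReal.comp (Real.measurable_exp.comp ((measurable_vS n).sub measurable_const)))
      hsetm
  have key := lintegral_rev μ ξ hmeas hindep hident n hG
  have hL : ∀ ω, G (fun i => ξ ((Fin.rev i : Fin n) : ℕ) ω)
      = Set.indicator {ω | 0 ≤ walkMin ξ n ω ∧ walkS ξ n ω ≤ A}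
        (fun ω => ENNReal.ofReal (Real.exp (walkS ξ n ω - A))) ω := by
    intro ω
    set x : Fin n → ℝ := fun i => ξ (i : ℕ) ω with hx
    have hxr : (fun i : Fin n => ξ ((Fin.rev i : Fin n) : ℕ) ω) = fun i => x (Fin.rev i) := rfl
    have hfull : vS n n (fun i => x (Fin.rev i)) = walkS ξ n ω := by
      rw [vS_rev x le_rfl, Nat.sub_self, vS_zero, sub_zero, walkS_eq_vS ξ ω le_rfl]
    have hcond : (∀ k ≤ n, vS n k (fun i => x (Fin.rev i)) ≤ vS n n (fun i => x (Fin.rev i)))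
        ↔ 0 ≤ walkMin ξ n ω := by
      rw [walkMin_nonneg_iff]
      constructor
      · intro h j hj
        have := h (n - j) (Nat.sub_le n j)
        rw [vS_rev x (Nat.sub_le n j), vS_rev x le_rfl, Nat.sub_self, vS_zero, sub_zero,
          Nat.sub_sub_self hj] at this
        rw [walkS_eq_vS ξ ω hj]
        linarith
      · intro h k hk
        rw [vS_rev x hk, vS_rev x le_rfl, Nat.sub_self, vS_zero, sub_zero]
        have := h (n - k) (Nat.sub_le n k)
        rw [walkS_eq_vS ξ ω (Nat.sub_le n k)] at this
        linarith
    rw [hGdef]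
    simp only [hxr, Set.indicator_apply, Set.mem_setOf_eq, hfull]
    rw [hfull] at hcond
    exact if_congr (and_congr hcond Iff.rfl) rfl rfl
  have hR : ∀ ω, G (fun i => ξ ((i : Fin n) : ℕ) ω)
      = Set.indicator {ω | (∀ k ≤ n, walkS ξ k ω ≤ walkS ξ n ω) ∧ walkS ξ n ω ≤ A}
        (fun ω => ENNReal.ofReal (Real.exp (walkS ξ n ω - A))) ω := by
    intro ω
    have hcond : (∀ k ≤ n, vS n k (fun i : Fin n => ξ (i : ℕ) ω) ≤ vS n n (fun i : Fin n => ξ (i : ℕ) ω))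
        ↔ ∀ k ≤ n, walkS ξ k ω ≤ walkS ξ n ω := by
      constructor
      · intro h k hk; rw [walkS_eq_vS ξ ω hk, walkS_eq_vS ξ ω (le_refl n)]; exact h k hk
      · intro h k hk; rw [← walkS_eq_vS ξ ω hk, ← walkS_eq_vS ξ ω (le_refl n)]; exact h k hk
    rw [hGdef]
    simp only [Set.indicator_apply, Set.mem_setOf_eq, ← walkS_eq_vS ξ ω (le_refl n)]
    rw [← walkS_eq_vS ξ ω (le_refl n)] at hcond
    exact if_congr (and_congr hcond Iff.rfl) rfl rfl
  calc ∫⁻ ω, Set.indicator {ω | 0 ≤ walkMin ξ n ω ∧ walkS ξ n ω ≤ A}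
        (fun ω => ENNReal.ofReal (Real.exp (walkS ξ n ω - A))) ω ∂μ
      = ∫⁻ ω, G (fun i => ξ ((Fin.rev i : Fin n) : ℕ) ω) ∂μ := by
        exact (lintegral_congr hL).symm
    _ = ∫⁻ ω, G (fun i => ξ ((i : Fin n) : ℕ) ω) ∂μ := key
    _ = _ := lintegral_congr hR

end dual

section counting
variable {Ω : Type*} [MeasurableSpace Ω] (μ : Measure Ω) [IsProbabilityMeasure μ]
  (ξ : ℕ → Ω → ℝ) (hmeas : ∀ i, Measurable (ξ i))
  (hindep : iIndepFun ξ μ)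
  (hident : ∀ i, IdentDistrib (ξ i) (ξ 0) μ μ)

/-- ladder points with value in `(b, b + L]`. -/
def LadSet (ξ : ℕ → Ω → ℝ) (b L : ℝ) (n : ℕ) : Set Ω :=
  {ω | (∀ k ≤ n, walkS ξ k ω ≤ walkS ξ n ω) ∧ b < walkS ξ n ω ∧ walkS ξ n ω ≤ b + L}

noncomputable def cnt (ξ : ℕ → Ω → ℝ) (b L : ℝ) (n : ℕ) (ω : Ω) : ℕ :=
  ∑ m ∈ Finset.range n, (LadSet ξ b L m).indicator (fun _ => 1) ω

/-- past sigma algebra -/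
def mPast (ξ : ℕ → Ω → ℝ) (n : ℕ) : MeasurableSpace Ω :=
  ⨆ i ∈ {i : ℕ | i < n}, MeasurableSpace.comap (ξ i) inferInstance

omit [MeasurableSpace Ω] in
lemma measurable_walkS_past {n : ℕ} {k : ℕ} (hk : k ≤ n) :
    Measurable[mPast ξ n] (walkS ξ k) := by
  apply Finset.measurable_sum (m := mPast ξ n)
  intro i hi
  have hin : i ∈ {i : ℕ | i < n} := lt_of_lt_of_le (Finset.mem_range.mp hi) hk
  exact measurable_iff_comap_le.mpr
    (le_biSup (fun i => MeasurableSpace.comap (ξ i) inferInstance) hin)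

omit [MeasurableSpace Ω] in
lemma measurableSet_LadSet_past {b L : ℝ} {n m : ℕ} (hm : m ≤ n) :
    MeasurableSet[mPast ξ n] (LadSet ξ b L m) := by
  have hrw : LadSet ξ b L m
      = (⋂ (k : ℕ) (_ : k ≤ m), {ω | walkS ξ k ω ≤ walkS ξ m ω})
        ∩ ({ω | b < walkS ξ m ω} ∩ {ω | walkS ξ m ω ≤ b + L}) := by
    ext ω; simp [LadSet, and_assoc]
  rw [hrw]
  refine MeasurableSet.inter ?_ (MeasurableSet.inter ?_ ?_)
  · exact MeasurableSet.iInter fun k => MeasurableSet.iInter fun hk =>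
      measurableSet_le (measurable_walkS_past ξ (le_trans hk hm)) (measurable_walkS_past ξ hm)
  · exact measurableSet_lt measurable_const (measurable_walkS_past ξ hm)
  · exact measurableSet_le (measurable_walkS_past ξ hm) measurable_const

omit [MeasurableSpace Ω] in
lemma measurable_cnt_past {b L : ℝ} {n : ℕ} :
    Measurable[mPast ξ n] (cnt ξ b L n) := by
  apply Finset.measurable_sum (m := mPast ξ n)
  intro m hm
  exact Measurable.indicator measurable_const
    (measurableSet_LadSet_past ξ (le_of_lt (Finset.mem_range.mp hm)))

include hmeas in
lemma mPast_le (n : ℕ) : mPast ξ n ≤ ‹MeasurableSpace Ω› := by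
  refine iSup₂_le fun i _ => (hmeas i).comap_le

include hmeas in
lemma measurableSet_LadSet' (b L : ℝ) (n : ℕ) : MeasurableSet (LadSet ξ b L n) :=
  mPast_le ξ hmeas n _ (measurableSet_LadSet_past ξ le_rfl)

include hmeas hindep in
lemma indep_past (n : ℕ) :
    Indep (mPast ξ n) (MeasurableSpace.comap (ξ n) inferInstance) μ := by
  have h := indep_iSup_of_disjoint
    (m := fun i => MeasurableSpace.comap (ξ i) inferInstance)
    (fun i => (hmeas i).comap_le)
    ((iIndepFun_iff_iIndep _ _ _).mp hindep)
    (S := {i : ℕ | i < n}) (T := {n}) (by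
      rw [Set.disjoint_singleton_right]
      simp)
  simpa [mPast] using h

include hmeas hindep hident in
lemma counting (b L : ℝ) :
    ∑' n : ℕ, μ (LadSet ξ b L n) ≤ (μ {ω | L ≤ ξ 0 ω})⁻¹ := by
  classical
  set q : ENNReal := μ {ω | ξ 0 ω < L} with hq
  -- measurability facts in the ambient space
  have hLadm : ∀ m : ℕ, MeasurableSet (LadSet ξ b L m) := fun m =>
    mPast_le ξ hmeas m _ (measurableSet_LadSet_past ξ le_rfl)
  have hoccm : ∀ k n : ℕ, MeasurableSet[mPast ξ n] (LadSet ξ b L n ∩ cnt ξ b L n ⁻¹' {k}) :=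
    fun k n => (measurableSet_LadSet_past ξ le_rfl).inter
      (measurable_cnt_past ξ (measurableSet_singleton k))
  have hoccm' : ∀ k n : ℕ, MeasurableSet (LadSet ξ b L n ∩ cnt ξ b L n ⁻¹' {k}) :=
    fun k n => mPast_le ξ hmeas n _ (hoccm k n)
  set occ : ℕ → ℕ → Set Ω := fun k n => LadSet ξ b L n ∩ cnt ξ b L n ⁻¹' {k} with hocc
  set B : ℕ → Set Ω := fun k => ⋃ n, occ k n with hB
  -- cnt is monotone in n along membership
  have hcnt_mono : ∀ (ω : Ω) {n n' : ℕ}, n ≤ n' → cnt ξ b L n ω ≤ cnt ξ b L n' ω := by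
    intro ω n n' h
    exact Finset.sum_le_sum_of_subset (Finset.range_subset_range.mpr h)
  -- occ k n disjoint in n
  have hdisj_key : ∀ k n n' : ℕ, n < n' → Disjoint (occ k n) (occ k n') := by
    intro k n n' h
    refine Set.disjoint_left.mpr ?_
    rintro ω ⟨hL1, hc1⟩ ⟨hL2, hc2⟩
    have h1 : cnt ξ b L (n + 1) ω = cnt ξ b L n ω + 1 := by
      unfold cnt
      rw [Finset.sum_range_succ, Set.indicator_of_mem hL1]
    have h2 := hcnt_mono ω (show n + 1 ≤ n' by omega)
    rw [h1] at h2
    simp only [Set.mem_preimage, Set.mem_singleton_iff] at hc1 hc2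
    omega
  have hdisj_n : ∀ k : ℕ, Pairwise (Function.onFun Disjoint fun n => occ k n) := by
    intro k n n' hne
    rcases hne.lt_or_gt with h | h
    · exact hdisj_key k n n' h
    · exact (hdisj_key k n' n h).symm
  -- Lad n = ⋃ k, occ k n, disjoint in k
  have hLad_eq : ∀ n, LadSet ξ b L n = ⋃ k, occ k n := by
    intro n; ext ω
    simp only [Set.mem_iUnion, hocc, Set.mem_inter_iff, Set.mem_preimage,
      Set.mem_singleton_iff]
    exact ⟨fun h => ⟨cnt ξ b L n ω, h, rfl⟩, fun ⟨k, h, _⟩ => h⟩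
  have hdisj_k : ∀ n : ℕ, Pairwise (Function.onFun Disjoint fun k => occ k n) := by
    intro n k k' hne
    refine Set.disjoint_left.mpr ?_
    rintro ω ⟨_, hc1⟩ ⟨_, hc2⟩
    simp only [Set.mem_preimage, Set.mem_singleton_iff] at hc1 hc2
    exact hne (hc1 ▸ hc2 ▸ rfl)
  -- step bound
  have hstep : ∀ k : ℕ, μ (B (k + 1)) ≤ q * μ (B k) := by
    intro k
    have hsub : B (k + 1) ⊆ ⋃ n, (occ k n ∩ {ω | ξ n ω < L}) := by
      intro ω hω
      obtain ⟨n', hn'⟩ := Set.mem_iUnion.mp hω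
      obtain ⟨hLad', hc'⟩ := hn'
      simp only [Set.mem_preimage, Set.mem_singleton_iff] at hc'
      set F := (Finset.range n').filter (fun m => ω ∈ LadSet ξ b L m) with hF
      have hcardF : F.card = k + 1 := by
        rw [hF, Finset.card_filter]
        rw [← hc']
        unfold cnt
        refine Finset.sum_congr rfl fun m _ => ?_
        by_cases h : ω ∈ LadSet ξ b L m <;> simp [h, Set.indicator_apply]
      have hne : F.Nonempty := Finset.card_pos.mp (by omega)
      set n := F.max' hne with hn
      have hnF : n ∈ F := F.max'_mem hne
      have hnlt : n < n' := Finset.mem_range.mp (Finset.mem_filter.mp hnF).1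
      have hLadn : ω ∈ LadSet ξ b L n := (Finset.mem_filter.mp hnF).2
      have herase : (Finset.range n).filter (fun m => ω ∈ LadSet ξ b L m) = F.erase n := by
        ext m
        simp only [Finset.mem_filter, Finset.mem_range, Finset.mem_erase, hF]
        constructor
        · rintro ⟨hmn, hm⟩
          exact ⟨by omega, by omega, hm⟩
        · rintro ⟨hmne, hmn', hm⟩
          have : m ≤ n := Finset.le_max' F m (by rw [hF]; exact Finset.mem_filter.mpr ⟨Finset.mem_range.mpr hmn', hm⟩)
          exact ⟨by omega, hm⟩
      have hcntn : cnt ξ b L n ω = k := by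
        have : cnt ξ b L n ω = ((Finset.range n).filter (fun m => ω ∈ LadSet ξ b L m)).card := by
          rw [Finset.card_filter]
          unfold cnt
          refine Finset.sum_congr rfl fun m _ => ?_
          by_cases h : ω ∈ LadSet ξ b L m <;> simp [h, Set.indicator_apply]
        rw [this, herase, Finset.card_erase_of_mem hnF, hcardF]
        omega
      have hxi : ξ n ω < L := by
        have hsucc : walkS ξ (n + 1) ω = walkS ξ n ω + ξ n ω := Finset.sum_range_succ _ _
        have h1 : walkS ξ (n + 1) ω ≤ walkS ξ n' ω := hLad'.1 (n + 1) (by omega)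
        have h2 : walkS ξ n' ω ≤ b + L := hLad'.2.2
        have h3 : b < walkS ξ n ω := hLadn.2.1
        linarith
      exact Set.mem_iUnion.mpr ⟨n, ⟨⟨hLadn, hcntn⟩, hxi⟩⟩
    calc μ (B (k + 1)) ≤ μ (⋃ n, (occ k n ∩ {ω | ξ n ω < L})) := measure_mono hsub
      _ ≤ ∑' n, μ (occ k n ∩ {ω | ξ n ω < L}) := measure_iUnion_le _
      _ = ∑' n, μ (occ k n) * q := by
          refine tsum_congr fun n => ?_
          have hind := indep_past μ ξ hmeas hindep n
          have hpre : {ω | ξ n ω < L} = ξ n ⁻¹' Set.Iio L := rfl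
          have heq := (Indep_iff _ _ μ).mp hind (occ k n) {ω | ξ n ω < L}
            (hoccm k n) ⟨Set.Iio L, measurableSet_Iio, rfl⟩
          rw [heq]
          congr 1
          rw [hpre, (hident n).measure_mem_eq measurableSet_Iio]
          rfl
      _ = q * ∑' n, μ (occ k n) := by rw [ENNReal.tsum_mul_right, mul_comm]
      _ = q * μ (B k) := by rw [measure_iUnion (hdisj_n k) (fun n => hoccm' k n)]
  -- μ (B k) ≤ q ^ k
  have hBk : ∀ k : ℕ, μ (B k) ≤ q ^ k := by
    intro k
    induction k with
    | zero => simpa using prob_le_one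
    | succ k ih =>
        calc μ (B (k + 1)) ≤ q * μ (B k) := hstep k
          _ ≤ q * q ^ k := by exact mul_le_mul_right ih q
          _ = q ^ (k + 1) := by ring
  -- conclude
  have hmain : ∑' n : ℕ, μ (LadSet ξ b L n) ≤ (1 - q)⁻¹ := by
    calc ∑' n : ℕ, μ (LadSet ξ b L n) = ∑' n : ℕ, ∑' k : ℕ, μ (occ k n) := by
          refine tsum_congr fun n => ?_
          rw [hLad_eq n, measure_iUnion (hdisj_k n) (fun k => hoccm' k n)]
      _ = ∑' k : ℕ, ∑' n : ℕ, μ (occ k n) := ENNReal.tsum_comm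
      _ = ∑' k : ℕ, μ (B k) := by
          refine tsum_congr fun k => ?_
          rw [measure_iUnion (hdisj_n k) (fun n => hoccm' k n)]
      _ ≤ ∑' k : ℕ, q ^ k := ENNReal.tsum_le_tsum hBk
      _ = (1 - q)⁻¹ := ENNReal.tsum_geometric q
  have hcompl : μ {ω | L ≤ ξ 0 ω} = 1 - q := by
    have hseteq : {ω | L ≤ ξ 0 ω} = {ω | ξ 0 ω < L}ᶜ := by
      ext ω; simp [not_lt]
    rw [hseteq, prob_compl_eq_one_sub (measurableSet_lt (hmeas 0) measurable_const)]
  rw [hcompl]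
  exact hmain

end counting

section posL
variable {Ω : Type*} [MeasurableSpace Ω] (μ : Measure Ω) [IsProbabilityMeasure μ]
  (ξ : ℕ → Ω → ℝ)

lemma exists_L (hmeas : ∀ i, Measurable (ξ i))
    (hmean : ∫ ω, ξ 0 ω ∂μ = 0)
    (hvar_int : Integrable (fun ω => (ξ 0 ω) ^ 2) μ)
    (hvar_pos : 0 < ∫ ω, (ξ 0 ω) ^ 2 ∂μ) :
    ∃ L : ℝ, 0 < L ∧ 0 < μ {ω | L ≤ ξ 0 ω} := by
  have hint : Integrable (ξ 0) μ := by
    refine Integrable.mono' ((integrable_const (1:ℝ)).add hvar_int)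
      (hmeas 0).aestronglyMeasurable (ae_of_all μ fun ω => ?_)
    have : |ξ 0 ω| ≤ 1 + (ξ 0 ω) ^ 2 := by nlinarith [sq_abs (ξ 0 ω), abs_nonneg (ξ 0 ω)]
    simpa using this
  have hpos : 0 < μ {ω | 0 < ξ 0 ω} := by
    by_contra h
    push_neg at h
    have hz : μ {ω | 0 < ξ 0 ω} = 0 := le_antisymm h zero_le
    have hae : 0 ≤ᵐ[μ] (fun ω => -ξ 0 ω) := by
      have h2 : ∀ᵐ ω ∂μ, (0:ℝ) ≤ -ξ 0 ω := by
        rw [ae_iff]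
        have hs : {a | ¬ (0:ℝ) ≤ -ξ 0 a} = {ω | 0 < ξ 0 ω} := by
          ext ω; simp [not_le]
        simpa only [hs] using hz
      exact h2
    have hneg_int : Integrable (fun ω => -ξ 0 ω) μ := hint.neg
    have hzero : ∫ ω, -ξ 0 ω ∂μ = 0 := by rw [integral_neg, hmean, neg_zero]
    have := (integral_eq_zero_iff_of_nonneg_ae hae hneg_int).mp hzero
    have hxi0 : ξ 0 =ᵐ[μ] 0 := by
      filter_upwards [this] with ω hω
      have h1 : -ξ 0 ω = 0 := hω
      have h2 : ξ 0 ω = 0 := by linarith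
      simpa using h2
    have hsq : (fun ω => (ξ 0 ω) ^ 2) =ᵐ[μ] (fun _ => (0:ℝ)) := by
      filter_upwards [hxi0] with ω hω
      have h2 : ξ 0 ω = 0 := hω
      simp [h2]
    have : ∫ ω, (ξ 0 ω) ^ 2 ∂μ = 0 := by
      rw [integral_congr_ae hsq, integral_zero]
    linarith
  have hcover : {ω | 0 < ξ 0 ω} = ⋃ k : ℕ, {ω | 1 / (k + 1 : ℝ) ≤ ξ 0 ω} := by
    ext ω
    simp only [Set.mem_setOf_eq, Set.mem_iUnion]
    constructor
    · intro h
      obtain ⟨k, hk⟩ := exists_nat_one_div_lt h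
      exact ⟨k, hk.le⟩
    · rintro ⟨k, hk⟩
      have : (0:ℝ) < 1 / (k + 1 : ℝ) := by positivity
      linarith
  by_contra hcon
  push_neg at hcon
  have hall : ∀ k : ℕ, μ {ω | 1 / (k + 1 : ℝ) ≤ ξ 0 ω} = 0 := by
    intro k
    have := hcon (1 / (k + 1 : ℝ)) (by positivity)
    exact le_antisymm this zero_le
  have : μ {ω | 0 < ξ 0 ω} = 0 := by
    rw [hcover]
    exact measure_iUnion_null fun k => hall k
  rw [this] at hpos
  exact lt_irrefl _ hpos

end posL

theorem sum_exp_mS_S_small_bound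
    {Ω : Type*} [MeasurableSpace Ω] (μ : Measure Ω) [IsProbabilityMeasure μ]
    (ξ : ℕ → Ω → ℝ) (hmeas : ∀ i, Measurable (ξ i))
    (hindep : iIndepFun ξ μ)
    (hident : ∀ i, IdentDistrib (ξ i) (ξ 0) μ μ)
    (hmean : ∫ ω, ξ 0 ω ∂μ = 0)
    (hvar_int : Integrable (fun ω => (ξ 0 ω) ^ 2) μ)
    (hvar_pos : 0 < ∫ ω, (ξ 0 ω) ^ 2 ∂μ)
    (hexp : ∃ δ₀ : ℝ, 0 < δ₀ ∧
      Integrable (fun ω => Real.exp (-δ₀ * ξ 0 ω)) μ ∧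
      Integrable (fun ω => Real.exp ((1 + δ₀) * ξ 0 ω)) μ)
    :
    ∃ C : ℝ, 0 < C ∧ ∀ A : ℝ, 0 < A →
      Summable (fun n : ℕ =>
        ∫ ω in {ω | 0 ≤ walkMin ξ n ω ∧ walkS ξ n ω ≤ A},
          Real.exp (walkS ξ n ω - A) ∂μ) ∧
      ∑' n : ℕ, ∫ ω in {ω | 0 ≤ walkMin ξ n ω ∧ walkS ξ n ω ≤ A},
          Real.exp (walkS ξ n ω - A) ∂μ ≤ C := by
  classical
  obtain ⟨L, hL, hp⟩ := exists_L μ ξ hmeas hmean hvar_int hvar_pos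
  set p : ENNReal := μ {ω | L ≤ ξ 0 ω} with hpdef
  set r : ENNReal := ENNReal.ofReal (Real.exp (-L)) with hrdef
  have hr1 : r < 1 := by
    rw [hrdef]
    rw [show (1 : ENNReal) = ENNReal.ofReal 1 by simp]
    exact ENNReal.ofReal_lt_ofReal_iff_of_nonneg (Real.exp_nonneg _) |>.mpr
      (by rw [show (1:ℝ) = Real.exp 0 by simp]; exact Real.exp_lt_exp.mpr (by linarith))
  have h1r_ne0 : (1 : ENNReal) - r ≠ 0 := by
    intro h
    rw [tsub_eq_zero_iff_le] at h
    exact absurd h (not_le.mpr hr1)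
  set Cenn : ENNReal := (1 - r)⁻¹ * p⁻¹ with hCenn
  have hCtop : Cenn ≠ ⊤ := by
    apply ENNReal.mul_ne_top
    · exact ENNReal.inv_ne_top.mpr h1r_ne0
    · exact ENNReal.inv_ne_top.mpr (ne_of_gt hp)
  have hC0 : Cenn ≠ 0 := by
    apply mul_ne_zero
    · refine ENNReal.inv_ne_zero.mpr ?_
      exact (tsub_le_self (a := (1:ENNReal)) (b := r)).trans_lt ENNReal.one_lt_top |>.ne
    · refine ENNReal.inv_ne_zero.mpr ?_
      exact ne_of_lt (lt_of_le_of_lt prob_le_one ENNReal.one_lt_top)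
  refine ⟨Cenn.toReal, ENNReal.toReal_pos hC0 hCtop, fun A hA => ?_⟩
  -- walkS measurable
  have hSm : ∀ k : ℕ, Measurable (walkS ξ k) := fun k =>
    Finset.measurable_sum _ fun i _ => hmeas i
  -- the sets
  set E : ℕ → Set Ω := fun n => {ω | 0 ≤ walkMin ξ n ω ∧ walkS ξ n ω ≤ A} with hE
  have hEeq : ∀ n, E n = (⋂ (k : ℕ) (_ : k ≤ n), {ω | 0 ≤ walkS ξ k ω})
      ∩ {ω | walkS ξ n ω ≤ A} := by
    intro n
    ext ω
    simp only [hE, Set.mem_setOf_eq, Set.mem_inter_iff, Set.mem_iInter,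
      walkMin_nonneg_iff ξ n ω]
  have hEm : ∀ n, MeasurableSet (E n) := by
    intro n
    rw [hEeq n]
    exact (MeasurableSet.iInter fun k => MeasurableSet.iInter fun _ =>
      measurableSet_le measurable_const (hSm k)).inter
      (measurableSet_le (hSm n) measurable_const)
  set F : ℕ → ENNReal := fun n =>
    ∫⁻ ω in E n, ENNReal.ofReal (Real.exp (walkS ξ n ω - A)) ∂μ with hF
  -- real integral = toReal of F
  have hreal : ∀ n, (∫ ω in E n, Real.exp (walkS ξ n ω - A) ∂μ) = (F n).toReal := by
    intro n
    simp only [hF]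
    rw [integral_eq_lintegral_of_nonneg_ae (f := fun ω => Real.exp (walkS ξ n ω - A)) (ae_of_all _ fun ω => Real.exp_nonneg _)
      (((hSm n).sub measurable_const).exp.aestronglyMeasurable)]
  -- F n as an indicator integral and duality
  have hFdual : ∀ n, F n = ∫⁻ ω, Set.indicator
      {ω | (∀ k ≤ n, walkS ξ k ω ≤ walkS ξ n ω) ∧ walkS ξ n ω ≤ A}
      (fun ω => ENNReal.ofReal (Real.exp (walkS ξ n ω - A))) ω ∂μ := by
    intro n
    simp only [hF]
    rw [← lintegral_indicator (hEm n), ← dual_step μ ξ hmeas hindep hident A n]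
  -- pointwise domination by ladder indicators
  have hptwise : ∀ n ω, Set.indicator
      {ω | (∀ k ≤ n, walkS ξ k ω ≤ walkS ξ n ω) ∧ walkS ξ n ω ≤ A}
      (fun ω => ENNReal.ofReal (Real.exp (walkS ξ n ω - A))) ω
      ≤ ∑' j : ℕ, (LadSet ξ (A - (j + 1) * L) L n).indicator (fun _ => r ^ j) ω := by
    intro n ω
    rw [Set.indicator_apply]
    split_ifs with hω
    · obtain ⟨hlad, hsA⟩ := hω
      set s := walkS ξ n ω with hs
      have hAs : 0 ≤ A - s := by linarith
      set j : ℕ := (⌊(A - s) / L⌋).toNat with hj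
      have hjf : (j : ℝ) = ⌊(A - s) / L⌋ := by
        rw [hj]
        exact_mod_cast Int.toNat_of_nonneg (Int.floor_nonneg.mpr (div_nonneg hAs hL.le))
      have hj1 : (j : ℝ) * L ≤ A - s := by
        rw [hjf]
        have := Int.floor_le ((A - s) / L)
        calc (⌊(A - s) / L⌋ : ℝ) * L ≤ ((A - s) / L) * L := by
              apply mul_le_mul_of_nonneg_right this hL.le
          _ = A - s := by field_simp
      have hj2 : A - s < ((j : ℝ) + 1) * L := by
        rw [hjf]
        have := Int.lt_floor_add_one ((A - s) / L)
        calc A - s = ((A - s) / L) * L := by field_simp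
          _ < ((⌊(A - s) / L⌋ : ℝ) + 1) * L := by
              apply mul_lt_mul_of_pos_right this hL
      have hmem : ω ∈ LadSet ξ (A - (j + 1) * L) L n := by
        refine ⟨hlad, by push_cast; linarith, by push_cast; linarith⟩
      have hval : ENNReal.ofReal (Real.exp (s - A)) ≤ r ^ j := by
        rw [hrdef, ← ENNReal.ofReal_pow (Real.exp_nonneg _), ← Real.exp_nat_mul]
        apply ENNReal.ofReal_le_ofReal
        apply Real.exp_le_exp.mpr
        have : (j : ℝ) * L ≤ A - s := hj1
        nlinarith
      calc ENNReal.ofReal (Real.exp (s - A)) ≤ r ^ j := hval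
        _ = (LadSet ξ (A - (j + 1) * L) L n).indicator (fun _ => r ^ j) ω := by
            rw [Set.indicator_of_mem hmem]
        _ ≤ ∑' j : ℕ, (LadSet ξ (A - (j + 1) * L) L n).indicator (fun _ => r ^ j) ω :=
            ENNReal.le_tsum j
    · exact zero_le
  -- F n bounded by sum of ladder measures
  have hFle : ∀ n, F n ≤ ∑' j : ℕ, r ^ j * μ (LadSet ξ (A - (j + 1) * L) L n) := by
    intro n
    rw [hFdual n]
    calc ∫⁻ ω, Set.indicator _ _ ω ∂μ
        ≤ ∫⁻ ω, ∑' j : ℕ, (LadSet ξ (A - (j + 1) * L) L n).indicator (fun _ => r ^ j) ω ∂μ :=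
          lintegral_mono (hptwise n)
      _ = ∑' j : ℕ, ∫⁻ ω, (LadSet ξ (A - (j + 1) * L) L n).indicator (fun _ => r ^ j) ω ∂μ :=
          lintegral_tsum fun j => (measurable_const.indicator
            (measurableSet_LadSet' ξ hmeas _ L n)).aemeasurable
      _ = ∑' j : ℕ, r ^ j * μ (LadSet ξ (A - (j + 1) * L) L n) := by
          refine tsum_congr fun j => ?_
          rw [lintegral_indicator (measurableSet_LadSet' ξ hmeas _ L n), setLIntegral_const]
  -- total bound
  have htotal : ∑' n, F n ≤ Cenn := by
    calc ∑' n, F n ≤ ∑' n, ∑' j : ℕ, r ^ j * μ (LadSet ξ (A - (j + 1) * L) L n) :=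
          ENNReal.tsum_le_tsum hFle
      _ = ∑' j : ℕ, ∑' n, r ^ j * μ (LadSet ξ (A - (j + 1) * L) L n) := ENNReal.tsum_comm
      _ = ∑' j : ℕ, r ^ j * ∑' n, μ (LadSet ξ (A - (j + 1) * L) L n) := by
          refine tsum_congr fun j => ?_
          rw [ENNReal.tsum_mul_left]
      _ ≤ ∑' j : ℕ, r ^ j * p⁻¹ := by
          refine ENNReal.tsum_le_tsum fun j => ?_
          exact mul_le_mul_right (counting μ ξ hmeas hindep hident _ L) _
      _ = (∑' j : ℕ, r ^ j) * p⁻¹ := by rw [ENNReal.tsum_mul_right]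
      _ = Cenn := by rw [ENNReal.tsum_geometric, hCenn]
  have hsum_ne_top : ∑' n, F n ≠ ⊤ := lt_of_le_of_lt htotal (lt_top_iff_ne_top.mpr hCtop) |>.ne
  have hFne : ∀ n, F n ≠ ⊤ := fun n =>
    ne_top_of_le_ne_top hsum_ne_top (ENNReal.le_tsum n)
  constructor
  · have := ENNReal.summable_toReal hsum_ne_top
    refine Summable.congr this fun n => ?_
    rw [hreal n]
  · have heq : (fun n : ℕ => ∫ ω in {ω | 0 ≤ walkMin ξ n ω ∧ walkS ξ n ω ≤ A},
        Real.exp (walkS ξ n ω - A) ∂μ) = fun n => (F n).toReal := by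
      funext n; exact hreal n
    rw [heq, ← ENNReal.tsum_toReal_eq hFne]
    exact ENNReal.toReal_mono hCtop htotal
end
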